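/- arXiv:2007.12338 — 3 statements merged into one kernel-verified Lean document; each statement's English description precedes it below -/
import Mathlib

section
/- Let Λ be an n×n doubly stochastic matrix and 𝐅 = (F₁,…,Fₙ) an n-tuple of Borel probability measures on ℝ with finite first moments. The following are equivalent: (a) (Λ⊗𝐅)ᵢ ≺_cx Fᵢ for every i; (b) Fᵢ ≺_cx (Λ⊗𝐅)ᵢ for every i; (c) Λ⊗𝐅 = 𝐅 (componentwise equality of measures). -/
open MeasureTheory
open scoped ENNReal BigOperators

noncomputable section

/-- The `f`-aggregation set: laws of `f (X₁,…,Xₙ)` over all couplings with marginals `F`. -/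
def aggSetF (n : ℕ) (f : (Fin n → ℝ) → ℝ) (F : Fin n → Measure ℝ) : Set (Measure ℝ) :=
  {H | ∃ μ : Measure (Fin n → ℝ), IsProbabilityMeasure μ ∧
    (∀ i, μ.map (fun x => x i) = F i) ∧ H = μ.map f}

/-- The aggregation set for sums. -/
def aggSet (n : ℕ) (F : Fin n → Measure ℝ) : Set (Measure ℝ) :=
  aggSetF n (fun x => ∑ i, x i) F

/-- A symmetric function on `ℝⁿ`. -/
def IsSymmetricFn (n : ℕ) (f : (Fin n → ℝ) → ℝ) : Prop :=
  ∀ (π : Equiv.Perm (Fin n)) (x : Fin n → ℝ), f (x ∘ π) = f x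

/-- Left-continuous quantile function of a measure on ℝ. -/
def quantile (F : Measure ℝ) (p : ℝ) : ℝ :=
  sInf {x : ℝ | p ≤ (F (Set.Iic x)).toReal}

/-- The uniform probability measure on (0,1). -/
def uniform01 : Measure ℝ := volume.restrict (Set.Ioo (0 : ℝ) 1)

/-- Comonotonic sum F₁ ⊕ ⋯ ⊕ Fₙ : the law of ∑ Fᵢ⁻¹(U), U uniform on (0,1). -/
def comonoSum (n : ℕ) (F : Fin n → Measure ℝ) : Measure ℝ :=
  uniform01.map (fun u => ∑ i, quantile (F i) u)

/-- Convex order F ≺cx G. -/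
def ConvexOrder (F G : Measure ℝ) : Prop :=
  ∀ φ : ℝ → ℝ, ConvexOn ℝ Set.univ φ → Integrable φ F → Integrable φ G →
    ∫ x, φ x ∂F ≤ ∫ x, φ x ∂G

/-- Stochastic order F ≺st G, i.e. F((-∞,x]) ≥ G((-∞,x]) for all x. -/
def StOrder (F G : Measure ℝ) : Prop :=
  ∀ x : ℝ, G (Set.Iic x) ≤ F (Set.Iic x)

/-- Doubly stochastic matrix. -/
def DoublyStochastic {n : ℕ} (Λ : Matrix (Fin n) (Fin n) ℝ) : Prop :=
  (∀ i j, 0 ≤ Λ i j) ∧ (∀ i, ∑ j, Λ i j = 1) ∧ (∀ j, ∑ i, Λ i j = 1)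

/-- Distribution mixture Λ𝐅 : i-th component is ∑ⱼ Λᵢⱼ Fⱼ. -/
def distMix {n : ℕ} (Λ : Matrix (Fin n) (Fin n) ℝ) (F : Fin n → Measure ℝ) :
    Fin n → Measure ℝ :=
  fun i => ∑ j, ENNReal.ofReal (Λ i j) • F j

/-- Quantile mixture Λ⊗𝐅 : i-th component is the law of ∑ⱼ Λᵢⱼ Fⱼ⁻¹(U). -/
def quantileMix {n : ℕ} (Λ : Matrix (Fin n) (Fin n) ℝ) (F : Fin n → Measure ℝ) :
    Fin n → Measure ℝ :=
  fun i => uniform01.map (fun u => ∑ j, Λ i j * quantile (F j) u)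

/-- Worst-case value of a risk measure over the aggregation set, valued in EReal. -/
def worstCase (ρ : Measure ℝ → ℝ) (n : ℕ) (F : Fin n → Measure ℝ) : EReal :=
  sSup ((fun H => ((ρ H : ℝ) : EReal)) '' aggSet n F)

/-- Worst-case Value-at-Risk over the aggregation set, valued in EReal. -/
def worstVaR (p : ℝ) (n : ℕ) (F : Fin n → Measure ℝ) : EReal :=
  sSup ((fun G => ((quantile G p : ℝ) : EReal)) '' aggSet n F)

/-- The class M_D of distributions with a nonincreasing density on an interval support. -/
def MemMD (F : Measure ℝ) : Prop :=
  ∃ f : ℝ → ℝ, Measurable f ∧ (∀ x, 0 ≤ f x) ∧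
    F = volume.withDensity (fun x => ENNReal.ofReal (f x)) ∧
    ∃ s : Set ℝ, s.OrdConnected ∧ (∀ x, x ∉ s → f x = 0) ∧
      (∀ x ∈ s, ∀ y ∈ s, x ≤ y → f y ≤ f x)

/-- The class M_I of distributions with a nondecreasing density on an interval support. -/
def MemMI (F : Measure ℝ) : Prop :=
  ∃ f : ℝ → ℝ, Measurable f ∧ (∀ x, 0 ≤ f x) ∧
    F = volume.withDensity (fun x => ENNReal.ofReal (f x)) ∧
    ∃ s : Set ℝ, s.OrdConnected ∧ (∀ x, x ∉ s → f x = 0) ∧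
      (∀ x ∈ s, ∀ y ∈ s, x ≤ y → f x ≤ f y)

/-- Pareto(α, θ) distribution, via its Lebesgue density α θ^α x^{-(α+1)} on [θ, ∞). -/
def pareto (α θ : ℝ) : Measure ℝ :=
  volume.withDensity
    (fun x => if θ ≤ x then ENNReal.ofReal (α * θ ^ α / x ^ (α + 1)) else 0)

/-- A monotone risk measure (w.r.t. stochastic order, on probability measures). -/
def MonotoneRisk (ρ : Measure ℝ → ℝ) : Prop :=
  ∀ F G : Measure ℝ, IsProbabilityMeasure F → IsProbabilityMeasure G →
    StOrder F G → ρ F ≤ ρ G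

/-- A risk measure consistent with convex order (on finite-mean probability measures). -/
def CxConsistentRisk (ρ : Measure ℝ → ℝ) : Prop :=
  ∀ F G : Measure ℝ, IsProbabilityMeasure F → IsProbabilityMeasure G →
    Integrable id F → Integrable id G → ConvexOrder F G → ρ F ≤ ρ G

/-- Uniform distribution on [a,b]. -/
def unifOn (a b : ℝ) : Measure ℝ :=
  (ENNReal.ofReal (b - a))⁻¹ • volume.restrict (Set.Icc a b)

/-- Bernoulli distribution with parameter p, as a measure on ℝ. -/
def bern (p : ℝ) : Measure ℝ :=
  ENNReal.ofReal (1 - p) • Measure.dirac (0 : ℝ) + ENNReal.ofReal p • Measure.dirac (1 : ℝ)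

/-- The set C(𝐅) of finite-mean distributions dominated by the comonotonic sum in convex order. -/
def CSet (n : ℕ) (F : Fin n → Measure ℝ) : Set (Measure ℝ) :=
  {G | IsProbabilityMeasure G ∧ Integrable id G ∧ ConvexOrder G (comonoSum n F)}


section AuxForStmt9

open Set Filter Topology

instance uniform01_prob : IsProbabilityMeasure uniform01 :=
  ⟨by simp [uniform01, Real.volume_Ioo]⟩

section QuantileBasic

variable (F : Measure ℝ) [IsProbabilityMeasure F]

lemma quantile_set_nonempty {p : ℝ} (hp : p < 1) :
    {x : ℝ | p ≤ (F (Set.Iic x)).toReal}.Nonempty := by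
  have h : Tendsto (fun x => F (Set.Iic x)) atTop (𝓝 1) := by
    simpa [measure_univ] using tendsto_measure_Iic_atTop F
  have h2 : Tendsto (fun x => (F (Set.Iic x)).toReal) atTop (𝓝 1) := by
    have := (ENNReal.tendsto_toReal (by norm_num : (1:ℝ≥0∞) ≠ ⊤)).comp h
    simpa [Function.comp_def] using this
  obtain ⟨x, hx⟩ := (h2.eventually (eventually_ge_nhds hp)).exists
  exact ⟨x, hx⟩

lemma quantile_set_bddBelow {p : ℝ} (hp : 0 < p) :
    BddBelow {x : ℝ | p ≤ (F (Set.Iic x)).toReal} := by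
  have hI : (⋂ n : ℕ, Set.Iic (-(n:ℝ))) = ∅ := by
    ext x
    simp only [Set.mem_iInter, Set.mem_Iic, Set.mem_empty_iff_false, iff_false, not_forall]
    obtain ⟨n, hn⟩ := exists_nat_gt (-x)
    exact ⟨n, by push_neg; linarith⟩
  have h : Tendsto (fun n : ℕ => F (Set.Iic (-(n:ℝ)))) atTop (𝓝 0) := by
    have := tendsto_measure_iInter_atTop (μ := F)
      (s := fun n : ℕ => Set.Iic (-(n:ℝ)))
      (fun n => measurableSet_Iic.nullMeasurableSet)
      (fun a b hab => Set.Iic_subset_Iic.2 (neg_le_neg (Nat.cast_le.2 hab)))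
      ⟨0, measure_ne_top F _⟩
    rw [hI] at this
    simpa [Function.comp_def] using this
  obtain ⟨n, hn⟩ := (h.eventually (eventually_lt_nhds (ENNReal.ofReal_pos.2 hp))).exists
  refine ⟨-(n:ℝ), fun z hz => ?_⟩
  by_contra hzy
  push_neg at hzy
  have h1 : F (Set.Iic z) ≤ F (Set.Iic (-(n:ℝ))) := measure_mono (Set.Iic_subset_Iic.2 hzy.le)
  have h2 : (F (Set.Iic z)).toReal < p :=
    ENNReal.toReal_lt_of_lt_ofReal (lt_of_le_of_lt h1 hn)
  exact absurd hz (by simp only [Set.mem_setOf_eq]; linarith)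

lemma quantile_monotoneOn : MonotoneOn (quantile F) (Set.Ioo 0 1) := by
  intro a ha b hb hab
  exact csInf_le_csInf (quantile_set_bddBelow F ha.1) (quantile_set_nonempty F hb.2)
    (fun x hx => le_trans hab hx)

lemma le_cdf_quantile {p : ℝ} (hp0 : 0 < p) (hp1 : p < 1) :
    ENNReal.ofReal p ≤ F (Set.Iic (quantile F p)) := by
  set S := {x : ℝ | p ≤ (F (Set.Iic x)).toReal} with hSdef
  obtain ⟨u, hu_anti, hu_tend, hu_mem⟩ :=
    exists_seq_tendsto_sInf (quantile_set_nonempty F hp1) (quantile_set_bddBelow F hp0)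
  have hIic : Set.Iic (sInf S) = ⋂ n, Set.Iic (u n) := by
    ext z
    simp only [Set.mem_Iic, Set.mem_iInter]
    constructor
    · intro hz n
      exact hz.trans (csInf_le (quantile_set_bddBelow F hp0) (hu_mem n))
    · intro hz
      exact ge_of_tendsto hu_tend (Eventually.of_forall hz)
  have htend := tendsto_measure_iInter_atTop (μ := F)
    (s := fun n => Set.Iic (u n)) (fun n => measurableSet_Iic.nullMeasurableSet)
    (fun a b hab => Set.Iic_subset_Iic.2 (hu_anti hab)) ⟨0, measure_ne_top F _⟩
  have hq : quantile F p = sInf S := rfl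
  rw [hq]
  rw [hIic]
  refine ge_of_tendsto htend (Eventually.of_forall fun n => ?_)
  simp only [Function.comp_apply]
  have h5 : p ≤ (F (Set.Iic (u n))).toReal := hu_mem n
  exact (ENNReal.ofReal_le_iff_le_toReal (measure_ne_top F _)).2 h5

lemma quantile_le_iff {p x : ℝ} (hp0 : 0 < p) (hp1 : p < 1) :
    quantile F p ≤ x ↔ p ≤ (F (Set.Iic x)).toReal := by
  constructor
  · intro h
    have h1 : ENNReal.ofReal p ≤ F (Set.Iic x) :=
      le_trans (le_cdf_quantile F hp0 hp1) (measure_mono (Set.Iic_subset_Iic.2 h))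
    exact le_trans (by simp [hp0.le]) (ENNReal.toReal_mono (measure_ne_top F _) h1)
  · intro h
    exact csInf_le (quantile_set_bddBelow F hp0) h

end QuantileBasic

section Measurability

lemma aemeasurable_of_monotoneOn {f : ℝ → ℝ} (hf : MonotoneOn f (Set.Ioo 0 1)) :
    AEMeasurable f uniform01 := by
  classical
  have hgm : Measurable (fun u : ℝ => if 0 < u ∧ u < 1 then f u else 0) := by
    apply measurable_of_Iio
    intro c
    have hoc : MeasurableSet (f ⁻¹' Set.Iio c ∩ Set.Ioo 0 1) := by
      refine Set.OrdConnected.measurableSet ?_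
      constructor
      rintro x ⟨hx, hx01⟩ y ⟨hy, hy01⟩ z hz
      have hz01 : z ∈ Set.Ioo (0:ℝ) 1 :=
        ⟨lt_of_lt_of_le hx01.1 hz.1, lt_of_le_of_lt hz.2 hy01.2⟩
      exact ⟨lt_of_le_of_lt (hf hz01 hy01 hz.2) hy, hz01⟩
    have hpre : (fun u : ℝ => if 0 < u ∧ u < 1 then f u else 0) ⁻¹' Set.Iio c =
        (f ⁻¹' Set.Iio c ∩ Set.Ioo 0 1) ∪ (if 0 < c then (Set.Ioo (0:ℝ) 1)ᶜ else ∅) := by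
      ext u
      simp only [Set.mem_preimage, Set.mem_Iio, Set.mem_union, Set.mem_inter_iff,
        Set.mem_compl_iff, Set.mem_Ioo, Set.mem_empty_iff_false]
      by_cases hu : 0 < u ∧ u < 1 <;> by_cases hc : 0 < c <;>
        simp only [if_pos, if_neg, hu, hc, Set.mem_Ioo, Set.mem_compl_iff,
          Set.mem_empty_iff_false, if_true, if_false] <;>
        tauto
    rw [hpre]
    by_cases hc : 0 < c
    · rw [if_pos hc]; exact hoc.union measurableSet_Ioo.compl
    · rw [if_neg hc]; simpa using hoc
  refine hgm.aemeasurable.congr ?_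
  have h1 : ∀ᵐ u ∂uniform01, u ∈ Set.Ioo (0:ℝ) 1 := by
    rw [uniform01]; exact ae_restrict_mem measurableSet_Ioo
  filter_upwards [h1] with u hu
  rw [Set.mem_Ioo] at hu
  exact if_pos hu

lemma aemeasurable_quantile (F : Measure ℝ) [IsProbabilityMeasure F] :
    AEMeasurable (quantile F) uniform01 :=
  aemeasurable_of_monotoneOn (quantile_monotoneOn F)

end Measurability

section MapQuantile

lemma uniform01_map_quantile (F : Measure ℝ) [IsProbabilityMeasure F] :
    uniform01.map (quantile F) = F := by
  have hmeas := aemeasurable_quantile F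
  have hprob : IsProbabilityMeasure (uniform01.map (quantile F)) :=
    Measure.isProbabilityMeasure_map hmeas
  refine Measure.ext_of_Iic _ F (fun x => ?_)
  rw [Measure.map_apply_of_aemeasurable hmeas measurableSet_Iic]
  rw [uniform01, Measure.restrict_apply' measurableSet_Ioo]
  set c : ℝ := (F (Set.Iic x)).toReal with hcdef
  have hc0 : 0 ≤ c := ENNReal.toReal_nonneg
  have hc1 : c ≤ 1 := by
    rw [hcdef]
    exact ENNReal.toReal_le_of_le_ofReal one_pos.le (by simpa using prob_le_one (μ := F) (s := Set.Iic x))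
  have hset : quantile F ⁻¹' Set.Iic x ∩ Set.Ioo 0 1 = Set.Iic c ∩ Set.Ioo 0 1 := by
    ext u
    simp only [Set.mem_inter_iff, Set.mem_preimage, Set.mem_Iic, Set.mem_Ioo]
    constructor
    · rintro ⟨hq, hu0, hu1⟩
      exact ⟨(quantile_le_iff F hu0 hu1).1 hq, hu0, hu1⟩
    · rintro ⟨hc, hu0, hu1⟩
      exact ⟨(quantile_le_iff F hu0 hu1).2 hc, hu0, hu1⟩
  rw [hset]
  have hF : F (Set.Iic x) = ENNReal.ofReal c := (ENNReal.ofReal_toReal (measure_ne_top F _)).symm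
  rcases lt_or_ge c 1 with hlt | hge
  · have : Set.Iic c ∩ Set.Ioo (0:ℝ) 1 = Set.Ioc 0 c := by
      ext u
      simp only [Set.mem_inter_iff, Set.mem_Iic, Set.mem_Ioo, Set.mem_Ioc]
      exact ⟨fun ⟨h1, h2, _⟩ => ⟨h2, h1⟩, fun ⟨h1, h2⟩ => ⟨h2, h1, lt_of_le_of_lt h2 hlt⟩⟩
    rw [this, Real.volume_Ioc, hF]
    simp
  · have hceq : c = 1 := le_antisymm hc1 hge
    have : Set.Iic c ∩ Set.Ioo (0:ℝ) 1 = Set.Ioo 0 1 := by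
      apply Set.inter_eq_self_of_subset_right
      intro u hu
      simp only [Set.mem_Iic]
      rw [hceq]; exact hu.2.le
    rw [this, Real.volume_Ioo, hF, hceq]
    norm_num

lemma integrable_quantile (F : Measure ℝ) [IsProbabilityMeasure F] (h : Integrable id F) :
    Integrable (quantile F) uniform01 := by
  have h2 : Integrable id (uniform01.map (quantile F)) := by
    rwa [uniform01_map_quantile F]
  exact (integrable_map_measure aestronglyMeasurable_id (aemeasurable_quantile F)).1 h2

end MapQuantile

section CoreAnalysis

lemma uniform01_ae_mem : ∀ᵐ u ∂uniform01, u ∈ Set.Ioo (0:ℝ) 1 := by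
  rw [uniform01]; exact ae_restrict_mem measurableSet_Ioo

lemma T_le {g h : ℝ → ℝ} (hgi : Integrable g uniform01)
    (hhi : Integrable h uniform01) (hmono : MonotoneOn h (Set.Ioo 0 1))
    (hS : ∀ t : ℝ, ∫ u, max (g u - t) 0 ∂uniform01 ≤ ∫ u, max (h u - t) 0 ∂uniform01)
    {p : ℝ} (hp : p ∈ Set.Ioo (0:ℝ) 1) :
    ∫ u in Set.Ioi p, g u ∂uniform01 ≤ ∫ u in Set.Ioi p, h u ∂uniform01 := by
  set t := h p with htdef
  have hgi' : Integrable (fun u => g u - t) uniform01 := hgi.sub (integrable_const t)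
  have hhi' : Integrable (fun u => h u - t) uniform01 := hhi.sub (integrable_const t)
  have hgp : Integrable (fun u => max (g u - t) 0) uniform01 := hgi'.pos_part
  have hhp : Integrable (fun u => max (h u - t) 0) uniform01 := hhi'.pos_part
  have s1 : ∫ u in Set.Ioi p, (g u - t) ∂uniform01
      ≤ ∫ u in Set.Ioi p, max (g u - t) 0 ∂uniform01 :=
    integral_mono hgi'.restrict hgp.restrict (fun u => le_max_left _ _)
  have s2 : ∫ u in Set.Ioi p, max (g u - t) 0 ∂uniform01
      ≤ ∫ u, max (g u - t) 0 ∂uniform01 :=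
    setIntegral_le_integral hgp (Eventually.of_forall (fun u => le_max_right _ _))
  have s4 : ∫ u, max (h u - t) 0 ∂uniform01 = ∫ u in Set.Ioi p, (h u - t) ∂uniform01 := by
    have hsplit := integral_add_compl (measurableSet_Ioi (a := p)) hhp
    have hzero : ∫ u in (Set.Ioi p)ᶜ, max (h u - t) 0 ∂uniform01 = 0 := by
      rw [Set.compl_Ioi]
      have hz : ∀ᵐ u ∂uniform01.restrict (Set.Iic p), max (h u - t) 0 = 0 := by
        filter_upwards [ae_restrict_mem measurableSet_Iic,
          ae_restrict_of_ae uniform01_ae_mem] with u h1 h2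
        exact max_eq_right (sub_nonpos.2 (hmono h2 hp h1))
      rw [integral_congr_ae hz, integral_zero]
    have hcongr : ∫ u in Set.Ioi p, max (h u - t) 0 ∂uniform01
        = ∫ u in Set.Ioi p, (h u - t) ∂uniform01 := by
      apply integral_congr_ae
      filter_upwards [ae_restrict_mem measurableSet_Ioi,
        ae_restrict_of_ae uniform01_ae_mem] with u h1 h2
      exact max_eq_left (sub_nonneg.2 (hmono hp h2 (le_of_lt h1)))
    rw [← hsplit, hzero, hcongr, add_zero]
  have chain : ∫ u in Set.Ioi p, (g u - t) ∂uniform01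
      ≤ ∫ u in Set.Ioi p, (h u - t) ∂uniform01 :=
    le_trans s1 (le_trans s2 (le_trans (hS t) (le_of_eq s4)))
  have e1 : ∫ u in Set.Ioi p, (g u - t) ∂uniform01
      = (∫ u in Set.Ioi p, g u ∂uniform01) - (∫ u in Set.Ioi p, (fun _ => t) u ∂uniform01) :=
    integral_sub hgi.restrict (integrable_const t).restrict
  have e2 : ∫ u in Set.Ioi p, (h u - t) ∂uniform01
      = (∫ u in Set.Ioi p, h u ∂uniform01) - (∫ u in Set.Ioi p, (fun _ => t) u ∂uniform01) :=
    integral_sub hhi.restrict (integrable_const t).restrict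
  rw [e1, e2] at chain
  linarith

end CoreAnalysis

section AEZero

lemma integral_uniform01_eq_zero_of_Ioi {f : ℝ → ℝ} (hi : Integrable f uniform01)
    (h0 : ∀ p ∈ Set.Ioo (0:ℝ) 1, ∫ u in Set.Ioi p, f u ∂uniform01 = 0) :
    ∫ u, f u ∂uniform01 = 0 := by
  set s : ℕ → Set ℝ := fun n => Set.Ioi ((1:ℝ)/(n+2)) with hsdef
  have hsm : ∀ n, MeasurableSet (s n) := fun _ => measurableSet_Ioi
  have hmono : Monotone s := by
    intro a b hab
    apply Set.Ioi_subset_Ioi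
    apply one_div_le_one_div_of_le (by positivity)
    have : (a:ℝ) ≤ b := Nat.cast_le.2 hab
    linarith
  have htend := tendsto_setIntegral_of_monotone hsm hmono hi.integrableOn
  have hfun : ∀ n, ∫ u in s n, f u ∂uniform01 = 0 := by
    intro n
    apply h0
    constructor
    · positivity
    · rw [div_lt_one (by positivity)]
      have : (0:ℝ) ≤ n := Nat.cast_nonneg n
      linarith
  have htend0 : Tendsto (fun _ : ℕ => (0:ℝ)) atTop (𝓝 (∫ u in ⋃ n, s n, f u ∂uniform01)) := by
    simpa [hfun] using htend
  have hL : ∫ u in ⋃ n, s n, f u ∂uniform01 = 0 :=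
    (tendsto_nhds_unique htend0 tendsto_const_nhds).symm.symm
  have hU : (⋃ n, s n) = Set.Ioi (0:ℝ) := by
    ext u
    simp only [Set.mem_iUnion, Set.mem_Ioi, hsdef]
    constructor
    · rintro ⟨n, hn⟩; exact lt_trans (by positivity) hn
    · intro hu
      obtain ⟨n, hn⟩ := exists_nat_gt (1/u)
      refine ⟨n, ?_⟩
      rw [div_lt_iff₀ (by positivity)]
      rw [div_lt_iff₀ hu] at hn
      nlinarith
  rw [hU] at hL
  have hres : uniform01.restrict (Set.Ioi (0:ℝ)) = uniform01 := by
    rw [uniform01, Measure.restrict_restrict measurableSet_Ioi,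
      Set.inter_eq_self_of_subset_right (fun u hu => hu.1)]
  rwa [hres] at hL

lemma ae_zero_of_setIntegral_Ioi {f : ℝ → ℝ} (hm : AEMeasurable f uniform01)
    (hi : Integrable f uniform01)
    (h0 : ∀ p ∈ Set.Ioo (0:ℝ) 1, ∫ u in Set.Ioi p, f u ∂uniform01 = 0) :
    f =ᵐ[uniform01] 0 := by
  have htot : ∫ u, f u ∂uniform01 = 0 := integral_uniform01_eq_zero_of_Ioi hi h0
  have hIoi : ∀ x : ℝ, ∫ u in Set.Ioi x, f u ∂uniform01 = 0 := by
    intro x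
    rcases le_or_gt x 0 with hx | hx
    · have hres : uniform01.restrict (Set.Ioi x) = uniform01 := by
        rw [uniform01, Measure.restrict_restrict measurableSet_Ioi]
        have hss : Set.Ioi x ∩ Set.Ioo (0:ℝ) 1 = Set.Ioo (0:ℝ) 1 :=
          Set.inter_eq_self_of_subset_right (fun u hu => lt_of_le_of_lt hx hu.1)
        rw [hss]
      show ∫ u, f u ∂(uniform01.restrict (Set.Ioi x)) = 0
      rw [hres]; exact htot
    rcases lt_or_ge x 1 with hx1 | hx1
    · exact h0 x ⟨hx, hx1⟩
    · have hres : uniform01.restrict (Set.Ioi x) = 0 := by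
        rw [uniform01, Measure.restrict_restrict measurableSet_Ioi]
        have hempty : Set.Ioi x ∩ Set.Ioo (0:ℝ) 1 = ∅ := by
          ext u
          simp only [Set.mem_inter_iff, Set.mem_Ioi, Set.mem_Ioo, Set.mem_empty_iff_false,
            iff_false, not_and]
          intro h1 h2
          intro h3
          linarith
        rw [hempty, Measure.restrict_empty]
      show ∫ u, f u ∂(uniform01.restrict (Set.Ioi x)) = 0
      rw [hres]
      exact integral_zero_measure f
  set ν₁ := uniform01.withDensity (fun u => ENNReal.ofReal (f u)) with hν₁
  set ν₂ := uniform01.withDensity (fun u => ENNReal.ofReal (-(f u))) with hν₂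
  have hm1 : AEMeasurable (fun u => ENNReal.ofReal (f u)) uniform01 :=
    ENNReal.measurable_ofReal.comp_aemeasurable hm
  have hm2 : AEMeasurable (fun u => ENNReal.ofReal (-(f u))) uniform01 :=
    ENNReal.measurable_ofReal.comp_aemeasurable hm.neg
  haveI hfin1 : IsFiniteMeasure ν₁ := isFiniteMeasure_withDensity_ofReal hi.hasFiniteIntegral
  haveI hfin2 : IsFiniteMeasure ν₂ := isFiniteMeasure_withDensity_ofReal hi.neg.hasFiniteIntegral
  have hseq : ∀ s : Set ℝ, MeasurableSet s → (∫ u in s, f u ∂uniform01 = 0) → ν₁ s = ν₂ s := by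
    intro s hs hzero
    have hint : Integrable f (uniform01.restrict s) := hi.restrict
    have heq := integral_eq_lintegral_pos_part_sub_lintegral_neg_part hint
    rw [hzero] at heq
    have h1 : ν₁ s = ∫⁻ a in s, ENNReal.ofReal (f a) ∂uniform01 := withDensity_apply _ hs
    have h2 : ν₂ s = ∫⁻ a in s, ENNReal.ofReal (-(f a)) ∂uniform01 := withDensity_apply _ hs
    have hne1 : ν₁ s ≠ ⊤ := measure_ne_top _ _
    have hne2 : ν₂ s ≠ ⊤ := measure_ne_top _ _
    rw [← h1, ← h2] at heq
    have htr : (ν₁ s).toReal = (ν₂ s).toReal := by linarith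
    exact (ENNReal.toReal_eq_toReal_iff' hne1 hne2).1 htr
  have hν : ν₁ = ν₂ := by
    refine Measure.ext_of_Iic ν₁ ν₂ (fun x => ?_)
    have hu : ν₁ Set.univ = ν₂ Set.univ :=
      hseq _ MeasurableSet.univ (by rw [Measure.restrict_univ]; exact htot)
    have hIoix : ν₁ (Set.Ioi x) = ν₂ (Set.Ioi x) := hseq _ measurableSet_Ioi (hIoi x)
    have c1 := measure_add_measure_compl (μ := ν₁) (measurableSet_Iic (a := x))
    have c2 := measure_add_measure_compl (μ := ν₂) (measurableSet_Iic (a := x))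
    rw [Set.compl_Iic] at c1 c2
    have hsum := c1.trans (hu.trans c2.symm)
    rw [hIoix] at hsum
    rw [add_comm (ν₁ (Set.Iic x)), add_comm (ν₂ (Set.Iic x))] at hsum
    exact (ENNReal.add_right_inj (measure_ne_top ν₂ _)).1 hsum
  have hlint : ∫⁻ u, ENNReal.ofReal (f u) ∂uniform01 ≠ ⊤ := by
    have : ∫⁻ u, ENNReal.ofReal (f u) ∂uniform01 = ν₁ Set.univ := by
      rw [hν₁, withDensity_apply _ MeasurableSet.univ, Measure.restrict_univ]
    rw [this]; exact measure_ne_top _ _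
  have hae : (fun u => ENNReal.ofReal (f u)) =ᵐ[uniform01] (fun u => ENNReal.ofReal (-(f u))) :=
    (withDensity_eq_iff hm1 hm2 hlint).1 hν
  filter_upwards [hae] with u hu
  simp only [Pi.zero_apply]
  by_contra hne
  rcases lt_or_gt_of_ne hne with hlt | hgt
  · rw [ENNReal.ofReal_eq_zero.2 hlt.le] at hu
    exact (ne_of_gt (ENNReal.ofReal_pos.2 (by linarith))) hu.symm
  · rw [ENNReal.ofReal_eq_zero.2 (by linarith : -(f u) ≤ 0)] at hu
    exact (ne_of_gt (ENNReal.ofReal_pos.2 hgt)) hu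

end AEZero

section Helpers

lemma posPart_convexOn (t : ℝ) : ConvexOn ℝ Set.univ (fun x : ℝ => max (x - t) 0) := by
  have h1 : ConvexOn ℝ Set.univ (fun x : ℝ => x - t) :=
    (convexOn_id convex_univ).sub (concaveOn_const t convex_univ)
  have h2 : ConvexOn ℝ Set.univ (fun _ : ℝ => (0:ℝ)) := convexOn_const 0 convex_univ
  exact h1.sup h2

lemma posPart_integrable (G : Measure ℝ) [IsProbabilityMeasure G] (h : Integrable id G)
    (t : ℝ) : Integrable (fun x => max (x - t) 0) G :=
  (h.sub (integrable_const t)).pos_part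

lemma quantileMix_eq_of_S_le {n : ℕ} (Λ : Matrix (Fin n) (Fin n) ℝ) (hΛ : DoublyStochastic Λ)
    (F : Fin n → Measure ℝ) (hF : ∀ i, IsProbabilityMeasure (F i))
    (hFint : ∀ i, Integrable id (F i))
    (hS : ∀ i t, ∫ u, max ((∑ j, Λ i j * quantile (F j) u) - t) 0 ∂uniform01
               ≤ ∫ u, max (quantile (F i) u - t) 0 ∂uniform01) :
    ∀ i, quantileMix Λ F i = F i := by
  have hqm : ∀ j, AEMeasurable (quantile (F j)) uniform01 := fun j => by
    haveI := hF j; exact aemeasurable_quantile (F j)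
  have hqmono : ∀ j, MonotoneOn (quantile (F j)) (Set.Ioo 0 1) := fun j => by
    haveI := hF j; exact quantile_monotoneOn (F j)
  have hqint : ∀ j, Integrable (quantile (F j)) uniform01 := fun j => by
    haveI := hF j; exact integrable_quantile (F j) (hFint j)
  have hmap : ∀ j, uniform01.map (quantile (F j)) = F j := fun j => by
    haveI := hF j; exact uniform01_map_quantile (F j)
  set Q : Fin n → ℝ → ℝ := fun i u => ∑ j, Λ i j * quantile (F j) u with hQdef
  have hQm : ∀ i, AEMeasurable (Q i) uniform01 := fun i =>
    Finset.aemeasurable_fun_sum _ (fun j _ => (hqm j).const_mul _)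
  have hQint : ∀ i, Integrable (Q i) uniform01 := fun i =>
    integrable_finset_sum _ (fun j _ => (hqint j).const_mul _)
  have hQmono : ∀ i, MonotoneOn (Q i) (Set.Ioo 0 1) := by
    intro i a ha b hb hab
    apply Finset.sum_le_sum
    intro j _
    exact mul_le_mul_of_nonneg_left (hqmono j ha hb hab) (hΛ.1 i j)
  have hTle : ∀ i, ∀ p ∈ Set.Ioo (0:ℝ) 1,
      ∫ u in Set.Ioi p, Q i u ∂uniform01 ≤ ∫ u in Set.Ioi p, quantile (F i) u ∂uniform01 :=
    fun i p hp => T_le (hQint i) (hqint i) (hqmono i) (hS i) hp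
  have hsum_eq : ∀ u, ∑ i, Q i u = ∑ j, quantile (F j) u := by
    intro u
    rw [Finset.sum_comm (γ := Fin n) (f := fun i j => Λ i j * quantile (F j) u)]
    refine Finset.sum_congr rfl (fun j _ => ?_)
    rw [← Finset.sum_mul, hΛ.2.2 j, one_mul]
  have hT_eq : ∀ p ∈ Set.Ioo (0:ℝ) 1, ∀ i,
      ∫ u in Set.Ioi p, Q i u ∂uniform01 = ∫ u in Set.Ioi p, quantile (F i) u ∂uniform01 := by
    intro p hp
    have hsum : ∑ i, ∫ u in Set.Ioi p, Q i u ∂uniform01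
        = ∑ i, ∫ u in Set.Ioi p, quantile (F i) u ∂uniform01 := by
      rw [← integral_finset_sum _ (fun i (_ : i ∈ Finset.univ) => (hQint i).restrict),
        ← integral_finset_sum _ (fun j (_ : j ∈ Finset.univ) => (hqint j).restrict)]
      exact integral_congr_ae (Filter.Eventually.of_forall (fun u => hsum_eq u))
    intro i
    by_contra hne
    have hlt : ∫ u in Set.Ioi p, Q i u ∂uniform01
        < ∫ u in Set.Ioi p, quantile (F i) u ∂uniform01 :=
      lt_of_le_of_ne (hTle i p hp) hne
    have hstrict : ∑ i, ∫ u in Set.Ioi p, Q i u ∂uniform01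
        < ∑ i, ∫ u in Set.Ioi p, quantile (F i) u ∂uniform01 :=
      Finset.sum_lt_sum (fun j _ => hTle j p hp) ⟨i, Finset.mem_univ i, hlt⟩
    exact absurd hsum (ne_of_lt hstrict)
  intro i
  have hzero : ∀ p ∈ Set.Ioo (0:ℝ) 1,
      ∫ u in Set.Ioi p, (Q i u - quantile (F i) u) ∂uniform01 = 0 := by
    intro p hp
    rw [integral_sub (hQint i).restrict (hqint i).restrict, hT_eq p hp i]
    ring
  have hae := ae_zero_of_setIntegral_Ioi ((hQm i).sub (hqm i))
    ((hQint i).sub (hqint i)) hzero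
  have hae' : Q i =ᵐ[uniform01] quantile (F i) := by
    filter_upwards [hae] with u hu
    have h4 : Q i u - quantile (F i) u = 0 := hu
    linarith
  calc quantileMix Λ F i = uniform01.map (Q i) := rfl
    _ = uniform01.map (quantile (F i)) := Measure.map_congr hae'
    _ = F i := hmap i

end Helpers

end AuxForStmt9

/-- Proposition 4.2(iii): convex-order comparisons with a quantile mixture
    force the mixture to be trivial. -/

theorem stmt9 (n : ℕ) (Λ : Matrix (Fin n) (Fin n) ℝ) (hΛ : DoublyStochastic Λ)
    (F : Fin n → Measure ℝ) (hF : ∀ i, IsProbabilityMeasure (F i))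
    (hFint : ∀ i, Integrable id (F i)) :
    ((∀ i, ConvexOrder (quantileMix Λ F i) (F i)) ↔ (∀ i, quantileMix Λ F i = F i)) ∧
      ((∀ i, ConvexOrder (F i) (quantileMix Λ F i)) ↔ (∀ i, quantileMix Λ F i = F i)) := by
  -- common infrastructure
  have hqm : ∀ j, AEMeasurable (quantile (F j)) uniform01 := fun j => by
    haveI := hF j; exact aemeasurable_quantile (F j)
  have hqint : ∀ j, Integrable (quantile (F j)) uniform01 := fun j => by
    haveI := hF j; exact integrable_quantile (F j) (hFint j)
  have hmap : ∀ j, uniform01.map (quantile (F j)) = F j := fun j => by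
    haveI := hF j; exact uniform01_map_quantile (F j)
  have hQm : ∀ i, AEMeasurable (fun u => ∑ j, Λ i j * quantile (F j) u) uniform01 := fun i =>
    Finset.aemeasurable_fun_sum _ (fun j _ => (hqm j).const_mul _)
  have hQint : ∀ i, Integrable (fun u => ∑ j, Λ i j * quantile (F j) u) uniform01 := fun i =>
    integrable_finset_sum _ (fun j _ => (hqint j).const_mul _)
  have hprob_mix : ∀ i, IsProbabilityMeasure (quantileMix Λ F i) := fun i =>
    Measure.isProbabilityMeasure_map (hQm i)
  have hint_mix : ∀ i, Integrable id (quantileMix Λ F i) := fun i =>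
    (integrable_map_measure aestronglyMeasurable_id (hQm i)).2 (hQint i)
  have hcont : ∀ t : ℝ, Continuous (fun x : ℝ => max (x - t) 0) := fun t =>
    (continuous_id.sub continuous_const).max continuous_const
  have hrepr_mix : ∀ i (t : ℝ), ∫ x, max (x - t) 0 ∂(quantileMix Λ F i)
      = ∫ u, max ((∑ j, Λ i j * quantile (F j) u) - t) 0 ∂uniform01 := fun i t =>
    integral_map (hQm i) ((hcont t).aestronglyMeasurable)
  have hrepr_F : ∀ i (t : ℝ), ∫ x, max (x - t) 0 ∂(F i)
      = ∫ u, max (quantile (F i) u - t) 0 ∂uniform01 := fun i t => by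
    conv_lhs => rw [← hmap i]
    exact integral_map (hqm i) ((hcont t).aestronglyMeasurable)
  have hPPmix : ∀ i (t : ℝ), Integrable (fun x => max (x - t) 0) (quantileMix Λ F i) :=
    fun i t => by
      haveI := hprob_mix i
      exact posPart_integrable _ (hint_mix i) t
  have hPPF : ∀ i (t : ℝ), Integrable (fun x => max (x - t) 0) (F i) := fun i t => by
    haveI := hF i
    exact posPart_integrable _ (hFint i) t
  have htrivial : (∀ i, quantileMix Λ F i = F i) →
      ∀ (G H : Fin n → Measure ℝ), (∀ i, G i = H i) → True := fun _ _ _ _ => trivial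
  constructor
  · constructor
    · intro h
      apply quantileMix_eq_of_S_le Λ hΛ F hF hFint
      intro i t
      have hle := h i (fun x => max (x - t) 0) (posPart_convexOn t) (hPPmix i t) (hPPF i t)
      rwa [hrepr_mix i t, hrepr_F i t] at hle
    · intro h i φ hφ h1 h2
      rw [h i]
  · constructor
    · intro h
      apply quantileMix_eq_of_S_le Λ hΛ F hF hFint
      intro i t
      -- reverse stop-loss inequality from the hypothesis
      have hrev : ∀ k, ∫ u, max (quantile (F k) u - t) 0 ∂uniform01
          ≤ ∫ u, max ((∑ j, Λ k j * quantile (F j) u) - t) 0 ∂uniform01 := fun k => by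
        have hle := h k (fun x => max (x - t) 0) (posPart_convexOn t) (hPPF k t) (hPPmix k t)
        rwa [hrepr_mix k t, hrepr_F k t] at hle
      -- Jensen pointwise
      have hJ : ∀ k, ∫ u, max ((∑ j, Λ k j * quantile (F j) u) - t) 0 ∂uniform01
          ≤ ∑ j, Λ k j * ∫ u, max (quantile (F j) u - t) 0 ∂uniform01 := by
        intro k
        have hpt : ∀ u, max ((∑ j, Λ k j * quantile (F j) u) - t) 0
            ≤ ∑ j, Λ k j * max (quantile (F j) u - t) 0 := by
          intro u
          have hrow : (∑ j, Λ k j * quantile (F j) u) - t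
              = ∑ j, Λ k j * (quantile (F j) u - t) := by
            simp only [mul_sub]
            rw [Finset.sum_sub_distrib, ← Finset.sum_mul, hΛ.2.1 k, one_mul]
          rw [hrow]
          apply max_le
          · apply Finset.sum_le_sum
            intro j _
            exact mul_le_mul_of_nonneg_left (le_max_left _ _) (hΛ.1 k j)
          · apply Finset.sum_nonneg
            intro j _
            exact mul_nonneg (hΛ.1 k j) (le_max_right _ _)
        have hint1 : Integrable (fun u => max ((∑ j, Λ k j * quantile (F j) u) - t) 0)
            uniform01 := ((hQint k).sub (integrable_const t)).pos_part
        have hint2 : Integrable (fun u => ∑ j, Λ k j * max (quantile (F j) u - t) 0)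
            uniform01 := integrable_finset_sum _
          (fun j _ => (((hqint j).sub (integrable_const t)).pos_part).const_mul _)
        have hmono := integral_mono hint1 hint2 hpt
        have heq := integral_finset_sum (μ := uniform01) Finset.univ
          (f := fun j (u : ℝ) => Λ k j * max (quantile (F j) u - t) 0)
          (fun j _ => (((hqint j).sub (integrable_const t)).pos_part).const_mul (Λ k j))
        rw [heq] at hmono
        refine le_trans hmono (le_of_eq (Finset.sum_congr rfl fun j _ => ?_))
        exact integral_const_mul _ _
      -- sum inequality
      have hsumJ : ∑ k, ∫ u, max ((∑ j, Λ k j * quantile (F j) u) - t) 0 ∂uniform01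
          ≤ ∑ j, ∫ u, max (quantile (F j) u - t) 0 ∂uniform01 := by
        calc ∑ k, ∫ u, max ((∑ j, Λ k j * quantile (F j) u) - t) 0 ∂uniform01
            ≤ ∑ k, ∑ j, Λ k j * ∫ u, max (quantile (F j) u - t) 0 ∂uniform01 :=
              Finset.sum_le_sum (fun k _ => hJ k)
          _ = ∑ j, ∫ u, max (quantile (F j) u - t) 0 ∂uniform01 := by
              rw [Finset.sum_comm]
              refine Finset.sum_congr rfl (fun j _ => ?_)
              rw [← Finset.sum_mul, hΛ.2.2 j, one_mul]
      -- conclude componentwise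
      by_contra hne
      push_neg at hne
      have hstrict : ∑ k, ∫ u, max (quantile (F k) u - t) 0 ∂uniform01
          < ∑ k, ∫ u, max ((∑ j, Λ k j * quantile (F j) u) - t) 0 ∂uniform01 :=
        Finset.sum_lt_sum (fun k _ => hrev k) ⟨i, Finset.mem_univ i, hne⟩
      linarith
    · intro h i φ hφ h1 h2
      rw [h i]


end
end

section
/- Let ρ be a risk measure that is consistent with convex order, defined on all finite-mean Borel probability measures on ℝ, let 𝐅 = (F₁,…,Fₙ) be an n-tuple of Borel probability measures on ℝ with finite first moments, and let Λ be an n×n doubly stochastic matrix. Then ρ̄(𝐅) = ρ̄(Λ⊗𝐅) = ρ(F₁⊕⋯⊕Fₙ). -/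
open MeasureTheory
open scoped ENNReal BigOperators

noncomputable section

namespace Agg
open Set Filter
open scoped Topology


/-- Right slope (right derivative as inf of forward difference quotients). -/
def rSlope (φ : ℝ → ℝ) (x : ℝ) : ℝ :=
  sInf ((fun y => (φ y - φ x) / (y - x)) '' Set.Ioi x)

variable {φ : ℝ → ℝ}

lemma slope_mono3 (hφ : ConvexOn ℝ Set.univ φ) {x y z : ℝ} (hxy : x < y) (hyz : y < z) :
    (φ y - φ x) / (y - x) ≤ (φ z - φ y) / (z - y) :=
  hφ.slope_mono_adjacent (mem_univ x) (mem_univ z) hxy hyz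

lemma rSlope_bddBelow (hφ : ConvexOn ℝ Set.univ φ) (x : ℝ) :
    BddBelow ((fun y => (φ y - φ x) / (y - x)) '' Set.Ioi x) := by
  refine ⟨(φ x - φ (x-1)) / (x - (x-1)), ?_⟩
  rintro v ⟨y, hy, rfl⟩
  exact slope_mono3 hφ (by linarith) hy

lemma rSlope_le_slope (hφ : ConvexOn ℝ Set.univ φ) {x y : ℝ} (hxy : x < y) :
    rSlope φ x ≤ (φ y - φ x) / (y - x) :=
  csInf_le (rSlope_bddBelow hφ x) ⟨y, hxy, rfl⟩

lemma slope_le_rSlope (hφ : ConvexOn ℝ Set.univ φ) {w x : ℝ} (hwx : w < x) :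
    (φ x - φ w) / (x - w) ≤ rSlope φ x := by
  refine le_csInf ⟨(φ (x+1) - φ x) / (x + 1 - x), ⟨x+1, by simp, rfl⟩⟩ ?_
  rintro v ⟨y, hy, rfl⟩
  exact slope_mono3 hφ hwx hy

/-- Supporting line property. -/
lemma rSlope_support (hφ : ConvexOn ℝ Set.univ φ) (x y : ℝ) :
    φ x + rSlope φ x * (y - x) ≤ φ y := by
  rcases lt_trichotomy x y with h | rfl | h
  · have h2 := rSlope_le_slope hφ h
    have hpos : 0 < y - x := by linarith
    rw [le_div_iff₀ hpos] at h2
    linarith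
  · simp
  · have h2 := slope_le_rSlope hφ h
    have hpos : 0 < x - y := by linarith
    rw [div_le_iff₀ hpos] at h2
    have : rSlope φ x * (y - x) = -(rSlope φ x * (x - y)) := by ring
    linarith

/-- Upper bound on increments: for `x ≤ y`, `φ y - φ x ≤ rSlope φ y * (y - x)`. -/
lemma rSlope_upper (hφ : ConvexOn ℝ Set.univ φ) {x y : ℝ} (hxy : x ≤ y) :
    φ y - φ x ≤ rSlope φ y * (y - x) := by
  rcases eq_or_lt_of_le hxy with rfl | h
  · simp
  · have h2 := slope_le_rSlope hφ h
    have hpos : 0 < y - x := by linarith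
    rw [div_le_iff₀ hpos] at h2
    linarith

lemma rSlope_mono (hφ : ConvexOn ℝ Set.univ φ) : Monotone (rSlope φ) := by
  intro x y hxy
  rcases eq_or_lt_of_le hxy with rfl | h
  · exact le_refl _
  · calc rSlope φ x ≤ (φ y - φ x) / (y - x) := rSlope_le_slope hφ h
      _ ≤ rSlope φ y := slope_le_rSlope hφ h


/-- Sum of hockey-stick functions on the grid `a + jδ`, `j = 1..N`. -/
def stickSum (g : ℝ → ℝ) (a δ : ℝ) (N : ℕ) (x : ℝ) : ℝ :=
  ∑ j ∈ Finset.range N, (g (a + (j+1)*δ) - g (a + j*δ)) * max (x - (a + (j+1)*δ)) 0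

/-- Piecewise-linear lower approximation of `φ` on `[a, a + Nδ]`. -/
def psiR (φ g : ℝ → ℝ) (a δ : ℝ) (N : ℕ) (x : ℝ) : ℝ :=
  φ a + g a * (x - a) + stickSum g a δ N x

variable {φ g : ℝ → ℝ} {a δ : ℝ}

lemma stickSum_nonneg (hg : Monotone g) (hδ : 0 ≤ δ) (N : ℕ) (x : ℝ) :
    0 ≤ stickSum g a δ N x := by
  apply Finset.sum_nonneg
  intro j _
  apply mul_nonneg
  · have : a + (j:ℝ)*δ ≤ a + ((j:ℝ)+1)*δ := by nlinarith
    simpa using sub_nonneg.2 (hg this)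
  · exact le_max_right _ _

lemma psiR_mono_N (hg : Monotone g) (hδ : 0 ≤ δ) {M N : ℕ} (hMN : M ≤ N) (x : ℝ) :
    psiR φ g a δ M x ≤ psiR φ g a δ N x := by
  unfold psiR stickSum
  have h := Finset.sum_le_sum_of_subset_of_nonneg
    (Finset.range_subset_range.2 hMN)
    (f := fun j : ℕ => (g (a + (j+1)*δ) - g (a + j*δ)) * max (x - (a + (j+1)*δ)) 0)
    ?_
  · linarith
  · intro j _ _
    apply mul_nonneg
    · have : a + (j:ℝ)*δ ≤ a + ((j:ℝ)+1)*δ := by nlinarith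
      simpa using sub_nonneg.2 (hg this)
    · exact le_max_right _ _

lemma psiR_linear_above (M : ℕ) {x : ℝ} (hx : a + M*δ ≤ x) (hδ : 0 ≤ δ) :
    psiR φ g a δ M x = psiR φ g a δ M (a + M*δ) + g (a + M*δ) * (x - (a + M*δ)) := by
  unfold psiR stickSum
  have key : ∀ j ∈ Finset.range M,
      (g (a + (j+1)*δ) - g (a + j*δ)) * max (x - (a + (j+1)*δ)) 0
      = (g (a + (j+1)*δ) - g (a + j*δ)) * max ((a + M*δ) - (a + (j+1)*δ)) 0
        + (g (a + (j+1)*δ) - g (a + j*δ)) * (x - (a + M*δ)) := by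
    intro j hj
    have hjM : (j:ℝ) + 1 ≤ (M:ℝ) := by
      have := Finset.mem_range.1 hj
      exact_mod_cast Nat.succ_le_of_lt this
    have h1 : a + ((j:ℝ)+1)*δ ≤ a + M*δ := by nlinarith
    have h2 : (0:ℝ) ≤ a + M*δ - (a + ((j:ℝ)+1)*δ) := by linarith
    have h3 : (0:ℝ) ≤ x - (a + ((j:ℝ)+1)*δ) := by linarith
    rw [max_eq_left h3, max_eq_left h2]
    ring
  rw [Finset.sum_congr rfl key, Finset.sum_add_distrib, ← Finset.sum_mul]
  have tele : ∑ j ∈ Finset.range M, (g (a + (j+1)*δ) - g (a + j*δ)) = g (a + M*δ) - g a := by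
    have := Finset.sum_range_sub (fun j : ℕ => g (a + j*δ)) M
    simp only [Nat.cast_add, Nat.cast_one] at this ⊢
    convert this using 2 with j
    push_cast
    ring
  rw [tele]
  ring

/-- The key induction: lower bound, linear extension bound, and error bound. -/
lemma psiR_key (hg : Monotone g)
    (hsupp : ∀ x y, φ x + g x * (y - x) ≤ φ y)
    (hup : ∀ x y, x ≤ y → φ y - φ x ≤ g y * (y - x))
    (hδ : 0 < δ) (M : ℕ) :
    (∀ x, a + M*δ ≤ x → psiR φ g a δ M x ≤ φ (a+M*δ) + g (a+M*δ) * (x - (a+M*δ)))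
    ∧ (∀ x, x ≤ a + M*δ → psiR φ g a δ M x ≤ φ x)
    ∧ (∀ x, a ≤ x → x ≤ a + M*δ → φ x ≤ psiR φ g a δ M x + δ * (g (a+M*δ) - g a)) := by
  induction M with
  | zero =>
    have e : ∀ x, psiR φ g a δ 0 x = φ a + g a * (x - a) := by
      intro x; simp [psiR, stickSum]
    refine ⟨?_, ?_, ?_⟩
    · intro x _; rw [e x]; push_cast; simp
    · intro x _; rw [e x]; exact hsupp a x
    · intro x h1 h2
      push_cast at h2 ⊢
      have : x = a := by linarith
      subst this
      rw [e x]; simp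
  | succ M IH =>
    obtain ⟨IH1, IH2, IH3⟩ := IH
    set tM := a + M*δ with htM
    have htM1 : a + ((M:ℕ)+1 : ℕ)*δ = tM + δ := by push_cast; ring
    have hsucc : ∀ x, psiR φ g a δ (M+1) x
        = psiR φ g a δ M x + (g (tM+δ) - g tM) * max (x - (tM+δ)) 0 := by
      intro x
      unfold psiR stickSum
      rw [Finset.sum_range_succ]
      have e1 : a + ((M:ℝ)+1)*δ = tM + δ := by rw [htM]; ring
      rw [e1]
      ring
    have hc : 0 ≤ g (tM+δ) - g tM := sub_nonneg.2 (hg (by linarith))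
    have haM : a ≤ tM := by
      rw [htM]; nlinarith [Nat.cast_nonneg (α := ℝ) M]
    refine ⟨?_, ?_, ?_⟩
    · intro x hx
      rw [htM1] at hx ⊢
      rw [hsucc x]
      have h1 : psiR φ g a δ M x ≤ φ tM + g tM * (x - tM) := IH1 x (by linarith)
      have h2 : φ tM + g tM * δ ≤ φ (tM + δ) := by
        have := hsupp tM (tM + δ); simpa using this
      have h3 : max (x - (tM+δ)) 0 = x - (tM+δ) := max_eq_left (by linarith)
      rw [h3]
      nlinarith [hc]
    · intro x hx
      rw [htM1] at hx
      rw [hsucc x, max_eq_right (by linarith), mul_zero, add_zero]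
      rcases le_or_gt x tM with h | h
      · exact IH2 x h
      · calc psiR φ g a δ M x ≤ φ tM + g tM * (x - tM) := IH1 x h.le
          _ ≤ φ x := hsupp tM x
    · intro x hax hx
      rw [htM1] at hx ⊢
      rw [hsucc x, max_eq_right (by linarith), mul_zero, add_zero]
      rcases le_or_gt x tM with h | h
      · have h1 := IH3 x hax h
        have h2 : g tM ≤ g (tM + δ) := hg (by linarith)
        nlinarith
      · have h1 : φ x - φ tM ≤ g x * (x - tM) := hup tM x h.le
        have h2 : g x ≤ g (tM + δ) := hg (by linarith)
        have h3 : φ tM ≤ psiR φ g a δ M tM + δ * (g tM - g a) := IH3 tM haM (le_refl _)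
        have h4 : psiR φ g a δ M x = psiR φ g a δ M tM + g tM * (x - tM) :=
          psiR_linear_above M h.le hδ.le
        have h5 : g x * (x - tM) ≤ g (tM+δ) * (x - tM) :=
          mul_le_mul_of_nonneg_right h2 (by linarith)
        have h6 : (g (tM+δ) - g tM) * (x - tM) ≤ (g (tM+δ) - g tM) * δ :=
          mul_le_mul_of_nonneg_left (by linarith) hc
        nlinarith
  
lemma psiR_le (hg : Monotone g)
    (hsupp : ∀ x y, φ x + g x * (y - x) ≤ φ y)
    (hup : ∀ x y, x ≤ y → φ y - φ x ≤ g y * (y - x))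
    (hδ : 0 < δ) (N : ℕ) (x : ℝ) : psiR φ g a δ N x ≤ φ x := by
  obtain ⟨H1, H2, _⟩ := psiR_key (φ := φ) (a := a) hg hsupp hup hδ N
  rcases le_or_gt x (a + N*δ) with h | h
  · exact H2 x h
  · calc psiR φ g a δ N x ≤ φ (a+N*δ) + g (a+N*δ) * (x - (a+N*δ)) := H1 x h.le
      _ ≤ φ x := hsupp _ x

lemma phi_le_psiR (hg : Monotone g)
    (hsupp : ∀ x y, φ x + g x * (y - x) ≤ φ y)
    (hup : ∀ x y, x ≤ y → φ y - φ x ≤ g y * (y - x))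
    (hδ : 0 < δ) (N : ℕ) {x : ℝ} (hax : a ≤ x) (hxN : x ≤ a + N*δ) :
    φ x ≤ psiR φ g a δ N x + δ * (g (x+δ) - g a) := by
  set M : ℕ := ⌈(x - a)/δ⌉₊ with hM
  have h0 : 0 ≤ (x - a)/δ := div_nonneg (by linarith) hδ.le
  have hM1 : x ≤ a + M*δ := by
    have := Nat.le_ceil ((x - a)/δ)
    rw [div_le_iff₀ hδ] at this
    linarith
  have hMN : M ≤ N := by
    rw [hM]
    apply Nat.ceil_le.2
    rw [div_le_iff₀ hδ]
    linarith
  have hM2 : a + M*δ ≤ x + δ := by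
    have := Nat.ceil_lt_add_one h0
    rw [← hM] at this
    have h2 : (M:ℝ)*δ < ((x-a)/δ + 1)*δ := by
      apply mul_lt_mul_of_pos_right this hδ
    rw [add_mul, div_mul_cancel₀ _ (ne_of_gt hδ), one_mul] at h2
    linarith
  obtain ⟨_, _, H3⟩ := psiR_key (φ := φ) (a := a) hg hsupp hup hδ M
  have h4 := H3 x hax hM1
  have h5 : psiR φ g a δ M x ≤ psiR φ g a δ N x := psiR_mono_N hg hδ.le hMN x
  have h6 : g (a+M*δ) ≤ g (x+δ) := hg hM2
  nlinarith


/-! ### Two-sided approximation and the cut criterion -/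

section CutCriterion

variable {φ : ℝ → ℝ}

lemma convexOn_neg_comp (hφ : ConvexOn ℝ Set.univ φ) :
    ConvexOn ℝ Set.univ (fun y => φ (-y)) := by
  refine ⟨convex_univ, ?_⟩
  intro x _ y _ p q hp hq hpq
  have h := hφ.2 (mem_univ (-x)) (mem_univ (-y)) hp hq hpq
  have e : p • (-x) + q • (-y) = -(p • x + q • y) := by
    simp only [smul_eq_mul]; ring
  rw [e] at h
  simpa using h

lemma neg_rSlope_le (hφ : ConvexOn ℝ Set.univ φ) :
    -(rSlope φ 0) ≤ rSlope (fun y => φ (-y)) 0 := by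
  refine le_csInf ⟨(φ (-1) - φ (-0)) / (1 - 0), ⟨1, by norm_num, rfl⟩⟩ ?_
  rintro v ⟨y, hy, rfl⟩
  have hy0 : (0:ℝ) < y := hy
  have h1 : (φ 0 - φ (-y)) / (0 - (-y)) ≤ rSlope φ 0 := slope_le_rSlope hφ (by linarith)
  simp only []
  have e : (φ (-y) - φ (-0)) / (y - 0) = -((φ 0 - φ (-y)) / (0 - (-y))) := by
    rw [neg_zero, sub_zero, zero_sub, neg_neg]
    ring
  rw [e]
  linarith

/-- The two-sided piecewise-linear approximation of a convex function,
with grid spacing `1/(k+1)` and range `k+1` on both sides of `0`. -/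
def phiApprox (φ : ℝ → ℝ) (k : ℕ) (x : ℝ) : ℝ :=
  φ 0 + rSlope φ 0 * x
    + (rSlope φ 0 + rSlope (fun y => φ (-y)) 0) * max (-x) 0
    + stickSum (rSlope φ) 0 (1/(k+1)) ((k+1)*(k+1)) x
    + stickSum (rSlope (fun y => φ (-y))) 0 (1/(k+1)) ((k+1)*(k+1)) (-x)

variable (hφ : ConvexOn ℝ Set.univ φ)

lemma stickSum_eq_zero {g : ℝ → ℝ} {a δ : ℝ} {N : ℕ} {x : ℝ} (hδ : 0 < δ) (hx : x ≤ a) :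
    stickSum g a δ N x = 0 := by
  unfold stickSum
  apply Finset.sum_eq_zero
  intro j _
  have : x - (a + ((j:ℝ)+1)*δ) ≤ 0 := by nlinarith [Nat.cast_nonneg (α := ℝ) j]
  rw [max_eq_right this, mul_zero]

lemma phiApprox_eq_right (k : ℕ) {x : ℝ} (hx : 0 ≤ x) :
    phiApprox φ k x = psiR φ (rSlope φ) 0 (1/(k+1)) ((k+1)*(k+1)) x := by
  have hδ : (0:ℝ) < 1/(k+1) := by positivity
  unfold phiApprox psiR
  rw [stickSum_eq_zero hδ (by linarith : -x ≤ 0), max_eq_right (by linarith : -x ≤ 0)]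
  ring

lemma phiApprox_eq_left (k : ℕ) {x : ℝ} (hx : x ≤ 0) :
    phiApprox φ k x = psiR (fun y => φ (-y)) (rSlope (fun y => φ (-y))) 0 (1/(k+1))
      ((k+1)*(k+1)) (-x) := by
  have hδ : (0:ℝ) < 1/(k+1) := by positivity
  unfold phiApprox psiR
  rw [stickSum_eq_zero hδ (by linarith : x ≤ 0), max_eq_left (by linarith : 0 ≤ -x)]
  simp only [neg_zero, sub_zero]
  ring

end CutCriterion

lemma stickSum_continuous {g : ℝ → ℝ} {a δ : ℝ} {N : ℕ} :
    Continuous (fun x => stickSum g a δ N x) := by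
  unfold stickSum
  apply continuous_finset_sum
  intro j _
  exact continuous_const.mul ((continuous_id.sub continuous_const).max continuous_const)

lemma phiApprox_continuous (φ : ℝ → ℝ) (k : ℕ) : Continuous (phiApprox φ k) := by
  unfold phiApprox
  refine (((continuous_const.add (continuous_const.mul continuous_id)).add
    (continuous_const.mul (continuous_neg.max continuous_const))).add
    stickSum_continuous).add (stickSum_continuous.comp continuous_neg)

variable {φ : ℝ → ℝ}

lemma phiApprox_le (hφ : ConvexOn ℝ Set.univ φ) (k : ℕ) (x : ℝ) :
    phiApprox φ k x ≤ φ x := by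
  have hδ : (0:ℝ) < 1/(k+1) := by positivity
  rcases le_total 0 x with hx | hx
  · rw [phiApprox_eq_right k hx]
    exact psiR_le (rSlope_mono hφ) (rSlope_support hφ) (fun x y h => rSlope_upper hφ h) hδ _ x
  · rw [phiApprox_eq_left k hx]
    have hφt := convexOn_neg_comp hφ
    have h := psiR_le (φ := fun y => φ (-y)) (rSlope_mono hφt) (rSlope_support hφt)
      (fun x y h => rSlope_upper hφt h) hδ ((k+1)*(k+1)) (-x) (a := 0)
    simpa using h

lemma phiApprox_ge (hφ : ConvexOn ℝ Set.univ φ) (k : ℕ) (x : ℝ) :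
    φ 0 + rSlope φ 0 * x + (rSlope φ 0 + rSlope (fun y => φ (-y)) 0) * max (-x) 0
      ≤ phiApprox φ k x := by
  have hδ : (0:ℝ) ≤ 1/(k+1) := by positivity
  have h1 := stickSum_nonneg (a := (0:ℝ)) (rSlope_mono hφ) hδ ((k+1)*(k+1)) x
  have h2 := stickSum_nonneg (a := (0:ℝ)) (rSlope_mono (convexOn_neg_comp hφ)) hδ
    ((k+1)*(k+1)) (-x)
  unfold phiApprox
  linarith

lemma tendsto_psiR_aux {g : ℝ → ℝ} (hg : Monotone g)
    (hsupp : ∀ x y, φ x + g x * (y - x) ≤ φ y)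
    (hup : ∀ x y, x ≤ y → φ y - φ x ≤ g y * (y - x))
    {x : ℝ} (hx : 0 ≤ x) :
    Tendsto (fun k : ℕ => psiR φ g 0 (1/(k+1)) ((k+1)*(k+1)) x) atTop (𝓝 (φ x)) := by
  set C := g (x+1) - g 0 with hC
  have hC0 : 0 ≤ C := sub_nonneg.2 (hg (by linarith))
  have hub : ∀ k : ℕ, psiR φ g 0 (1/(k+1)) ((k+1)*(k+1)) x ≤ φ x := by
    intro k
    exact psiR_le hg hsupp hup (by positivity) _ x
  have hlb : ∀ k : ℕ, x ≤ (k:ℝ)+1 →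
      φ x - (1/((k:ℝ)+1)) * C ≤ psiR φ g 0 (1/(k+1)) ((k+1)*(k+1)) x := by
    intro k hk
    have hδ : (0:ℝ) < 1/(k+1) := by positivity
    have hN : x ≤ 0 + (((k+1)*(k+1) : ℕ):ℝ) * (1/((k:ℝ)+1)) := by
      push_cast
      rw [zero_add, mul_one_div]
      have hk1 : (0:ℝ) < (k:ℝ)+1 := by positivity
      rw [mul_comm]
      field_simp
      nlinarith
    have h := phi_le_psiR hg hsupp hup hδ ((k+1)*(k+1)) hx (by exact_mod_cast hN)
    have hδ1 : (1:ℝ)/((k:ℝ)+1) ≤ 1 := by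
      rw [div_le_one (by positivity)]; linarith [Nat.cast_nonneg (α := ℝ) k]
    have hgx : g (x + 1/((k:ℝ)+1)) ≤ g (x+1) := hg (by linarith)
    have : (1/((k:ℝ)+1)) * (g (x + 1/((k:ℝ)+1)) - g 0) ≤ (1/((k:ℝ)+1)) * C := by
      apply mul_le_mul_of_nonneg_left _ (by positivity)
      rw [hC]; linarith
    push_cast at h
    linarith
  have hev : ∀ᶠ k : ℕ in atTop, φ x - (1/((k:ℝ)+1)) * C
      ≤ psiR φ g 0 (1/(k+1)) ((k+1)*(k+1)) x := by
    filter_upwards [eventually_ge_atTop ⌈x⌉₊] with k hk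
    apply hlb
    calc x ≤ ⌈x⌉₊ := Nat.le_ceil x
      _ ≤ (k:ℝ) := by exact_mod_cast hk
      _ ≤ (k:ℝ)+1 := by linarith
  have hlow : Tendsto (fun k : ℕ => φ x - (1/((k:ℝ)+1)) * C) atTop (𝓝 (φ x)) := by
    have h0 : Tendsto (fun k : ℕ => (1/((k:ℝ)+1)) * C) atTop (𝓝 0) := by
      simpa using tendsto_one_div_add_atTop_nhds_zero_nat.mul_const C
    simpa using tendsto_const_nhds.sub h0
  exact tendsto_of_tendsto_of_tendsto_of_le_of_le' hlow tendsto_const_nhds hev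
    (Eventually.of_forall hub)

lemma phiApprox_tendsto (hφ : ConvexOn ℝ Set.univ φ) (x : ℝ) :
    Tendsto (fun k => phiApprox φ k x) atTop (𝓝 (φ x)) := by
  rcases le_total 0 x with hx | hx
  · have h := tendsto_psiR_aux (rSlope_mono hφ) (rSlope_support hφ)
      (fun x y h => rSlope_upper hφ h) hx
    exact h.congr (fun k => (phiApprox_eq_right k hx).symm)
  · have hφt := convexOn_neg_comp hφ
    have h := tendsto_psiR_aux (φ := fun y => φ (-y)) (rSlope_mono hφt) (rSlope_support hφt)
      (fun x y h => rSlope_upper hφt h) (x := -x) (by linarith)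
    simp only [neg_neg] at h
    exact h.congr (fun k => (phiApprox_eq_left k hx).symm)

/-! ### Integrability of hockey sticks, and the cut criterion -/

lemma hplus_abs_le (t x : ℝ) : |max (x - t) 0| ≤ |x| + |t| := by
  rw [abs_of_nonneg (le_max_right _ _)]
  apply max_le _ (by positivity)
  have h1 := le_abs_self x
  have h2 := neg_abs_le t
  linarith

lemma hminus_abs_le (t x : ℝ) : |max (t - x) 0| ≤ |x| + |t| := by
  rw [abs_of_nonneg (le_max_right _ _)]
  apply max_le _ (by positivity)
  have h1 := neg_abs_le x
  have h2 := le_abs_self t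
  linarith

lemma integrable_hplus {H : Measure ℝ} [IsFiniteMeasure H] (hH : Integrable id H) (t : ℝ) :
    Integrable (fun x => max (x - t) 0) H := by
  apply Integrable.mono' (hH.abs.add (integrable_const |t|))
  · exact ((continuous_id.sub continuous_const).max continuous_const).aestronglyMeasurable
  · filter_upwards with x
    rw [Real.norm_eq_abs]
    exact hplus_abs_le t x

lemma integrable_hminus {H : Measure ℝ} [IsFiniteMeasure H] (hH : Integrable id H) (t : ℝ) :
    Integrable (fun x => max (t - x) 0) H := by
  apply Integrable.mono' (hH.abs.add (integrable_const |t|))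
  · exact ((continuous_const.sub continuous_id).max continuous_const).aestronglyMeasurable
  · filter_upwards with x
    rw [Real.norm_eq_abs]
    exact hminus_abs_le t x

lemma hminus_eq (t x : ℝ) : max (t - x) 0 = max (x - t) 0 - (x - t) := by
  rcases le_total x t with h | h
  · rw [max_eq_left (by linarith), max_eq_right (by linarith)]; ring
  · rw [max_eq_right (by linarith), max_eq_left (by linarith)]; ring

lemma SL_hminus {H K : Measure ℝ} [IsProbabilityMeasure H] [IsProbabilityMeasure K]
    (hH : Integrable id H) (hK : Integrable id K)
    (hmean : ∫ x, x ∂H = ∫ x, x ∂K)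
    (hSL : ∀ t, (∫ x, max (x - t) 0 ∂H) ≤ ∫ x, max (x - t) 0 ∂K) (t : ℝ) :
    (∫ x, max (t - x) 0 ∂H) ≤ ∫ x, max (t - x) 0 ∂K := by
  have hid : Integrable (fun x : ℝ => x) H := hH
  have hid' : Integrable (fun x : ℝ => x) K := hK
  have e : ∀ (M : Measure ℝ) [IsProbabilityMeasure M], Integrable (fun x : ℝ => x) M →
      (∫ x, max (t - x) 0 ∂M) = (∫ x, max (x - t) 0 ∂M) - ((∫ x, x ∂M) - t) := by
    intro M _ hM
    have : (∫ x, max (t - x) 0 ∂M) = ∫ x, (max (x - t) 0 - (x - t)) ∂M := by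
      apply integral_congr_ae
      filter_upwards with x
      exact hminus_eq t x
    have hsub : Integrable (fun x : ℝ => x - t) M := hM.sub (integrable_const t)
    rw [this, integral_sub (integrable_hplus hM t) hsub,
      integral_sub hM (integrable_const t), integral_const]
    simp [measure_univ]
  rw [e H hid, e K hid']
  have := hSL t
  linarith [hmean]

theorem cutCriterion {H K : Measure ℝ} [IsProbabilityMeasure H] [IsProbabilityMeasure K]
    (hH : Integrable id H) (hK : Integrable id K)
    (hmean : ∫ x, x ∂H = ∫ x, x ∂K)
    (hSL : ∀ t, (∫ x, max (x - t) 0 ∂H) ≤ ∫ x, max (x - t) 0 ∂K)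
    (hφ : ConvexOn ℝ Set.univ φ) (hφH : Integrable φ H) (hφK : Integrable φ K) :
    ∫ x, φ x ∂H ≤ ∫ x, φ x ∂K := by
  set g := rSlope φ with hg
  set gt := rSlope (fun y => φ (-y)) with hgt
  have hgm := rSlope_mono hφ
  have hgtm := rSlope_mono (convexOn_neg_comp hφ)
  have hc1 : 0 ≤ g 0 + gt 0 := by
    have := neg_rSlope_le hφ; rw [hg, hgt]; linarith
  -- integrability and value of the integral of phiApprox
  have main : ∀ (M : Measure ℝ) [IsProbabilityMeasure M], Integrable id M → ∀ k : ℕ,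
      ∫ x, phiApprox φ k x ∂M
        = (φ 0 + g 0 * (∫ x, x ∂M))
          + (g 0 + gt 0) * (∫ x, max (0 - x) 0 ∂M)
          + (∑ j ∈ Finset.range ((k+1)*(k+1)),
              (g (0+((j:ℝ)+1)*(1/(k+1))) - g (0+(j:ℝ)*(1/(k+1))))
                * (∫ x, max (x - (0+((j:ℝ)+1)*(1/(k+1)))) 0 ∂M))
          + (∑ j ∈ Finset.range ((k+1)*(k+1)),
              (gt (0+((j:ℝ)+1)*(1/(k+1))) - gt (0+(j:ℝ)*(1/(k+1))))
                * (∫ x, max ((-(0+((j:ℝ)+1)*(1/(k+1)))) - x) 0 ∂M)) := by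
    intro M _ hM k
    set δ : ℝ := 1/(k+1) with hδdef
    set N : ℕ := (k+1)*(k+1) with hNdef
    have hint1 : Integrable (fun x : ℝ => φ 0 + g 0 * x) M :=
      (integrable_const _).add (hM.const_mul _)
    have hint2 : Integrable (fun x : ℝ => (g 0 + gt 0) * max (0 - x) 0) M :=
      (integrable_hminus hM 0).const_mul _
    have hint3 : Integrable (fun x => stickSum g 0 δ N x) M := by
      unfold stickSum
      apply integrable_finset_sum
      intro j _
      exact (integrable_hplus hM _).const_mul _
    have hint4 : Integrable (fun x => stickSum gt 0 δ N (-x)) M := by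
      have e : ∀ x : ℝ, stickSum gt 0 δ N (-x)
          = ∑ j ∈ Finset.range N, (gt (0+((j:ℝ)+1)*δ) - gt (0+(j:ℝ)*δ))
              * max ((-(0+((j:ℝ)+1)*δ)) - x) 0 := by
        intro x
        unfold stickSum
        refine Finset.sum_congr rfl (fun j _ => ?_)
        congr 1
        congr 1
        ring
      rw [show (fun x => stickSum gt 0 δ N (-x)) = _ from funext e]
      apply integrable_finset_sum
      intro j _
      exact (integrable_hminus hM _).const_mul _
    have e0 : ∀ x : ℝ, phiApprox φ k x
        = (φ 0 + g 0 * x) + ((g 0 + gt 0) * max (0 - x) 0)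
          + stickSum g 0 δ N x + stickSum gt 0 δ N (-x) := by
      intro x
      unfold phiApprox
      rw [← hg, ← hgt, ← hδdef, ← hNdef]
      have : max (-x) 0 = max (0 - x) 0 := by rw [zero_sub]
      rw [this]
    have hA1 : Integrable (fun x : ℝ => (φ 0 + g 0 * x) + ((g 0 + gt 0) * max (0 - x) 0)) M :=
      hint1.add hint2
    have hA2 : Integrable
        (fun x : ℝ => (φ 0 + g 0 * x) + ((g 0 + gt 0) * max (0 - x) 0) + stickSum g 0 δ N x) M :=
      hA1.add hint3
    have hconst : Integrable (fun _ : ℝ => φ 0) M := integrable_const _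
    have hlin : Integrable (fun x : ℝ => g 0 * x) M := hM.const_mul _
    rw [show (fun x => phiApprox φ k x) = _ from funext e0]
    rw [integral_add hA2 hint4, integral_add hA1 hint3, integral_add hint1 hint2,
      integral_add hconst hlin, integral_const, integral_const_mul, integral_const_mul]
    have e3 : ∫ x, stickSum g 0 δ N x ∂M
        = ∑ j ∈ Finset.range N, (g (0+((j:ℝ)+1)*δ) - g (0+(j:ℝ)*δ))
            * (∫ x, max (x - (0+((j:ℝ)+1)*δ)) 0 ∂M) := by
      unfold stickSum
      rw [integral_finset_sum _ (fun j _ => (integrable_hplus hM _).const_mul _)]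
      exact Finset.sum_congr rfl (fun j _ => integral_const_mul _ _)
    have e4 : ∫ x, stickSum gt 0 δ N (-x) ∂M
        = ∑ j ∈ Finset.range N, (gt (0+((j:ℝ)+1)*δ) - gt (0+(j:ℝ)*δ))
            * (∫ x, max ((-(0+((j:ℝ)+1)*δ)) - x) 0 ∂M) := by
      have e : ∀ x : ℝ, stickSum gt 0 δ N (-x)
          = ∑ j ∈ Finset.range N, (gt (0+((j:ℝ)+1)*δ) - gt (0+(j:ℝ)*δ))
              * max ((-(0+((j:ℝ)+1)*δ)) - x) 0 := by
        intro x
        unfold stickSum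
        refine Finset.sum_congr rfl (fun j _ => ?_)
        congr 1
        congr 1
        ring
      rw [show (fun x => stickSum gt 0 δ N (-x)) = _ from funext e]
      rw [integral_finset_sum _ (fun j _ => (integrable_hminus hM _).const_mul _)]
      exact Finset.sum_congr rfl (fun j _ => integral_const_mul _ _)
    rw [e3, e4]
    simp [measure_univ]
  have step : ∀ k : ℕ, (∫ x, phiApprox φ k x ∂H) ≤ ∫ x, phiApprox φ k x ∂K := by
    intro k
    rw [main H hH k, main K hK k]
    have hSLm := SL_hminus hH hK hmean hSL
    gcongr ?_ + ?_ + ?_ + ?_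
    · rw [hmean]
    · exact mul_le_mul_of_nonneg_left (hSLm 0) hc1
    · apply Finset.sum_le_sum
      intro j _
      apply mul_le_mul_of_nonneg_left (hSL _)
      have : (0:ℝ)+(j:ℝ)*(1/(k+1)) ≤ 0+((j:ℝ)+1)*(1/(k+1)) := by
        have : (0:ℝ) ≤ 1/((k:ℝ)+1) := by positivity
        nlinarith
      exact sub_nonneg.2 (hgm this)
    · apply Finset.sum_le_sum
      intro j _
      apply mul_le_mul_of_nonneg_left (hSLm _)
      have : (0:ℝ)+(j:ℝ)*(1/(k+1)) ≤ 0+((j:ℝ)+1)*(1/(k+1)) := by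
        have : (0:ℝ) ≤ 1/((k:ℝ)+1) := by positivity
        nlinarith
      exact sub_nonneg.2 (hgtm this)
  -- dominated convergence on both sides
  have tends : ∀ (M : Measure ℝ) [IsProbabilityMeasure M], Integrable id M → Integrable φ M →
      Tendsto (fun k => ∫ x, phiApprox φ k x ∂M) atTop (𝓝 (∫ x, φ x ∂M)) := by
    intro M _ hM hφM
    apply tendsto_integral_of_dominated_convergence
      (bound := fun x => |φ x| + |φ 0| + (|g 0| + (g 0 + gt 0)) * |x|)
    · exact fun k => (phiApprox_continuous φ k).aestronglyMeasurable
    · exact (hφM.abs.add (integrable_const _)).add ((hM.abs).const_mul _)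
    · intro k
      filter_upwards with x
      rw [Real.norm_eq_abs, abs_le]
      have h1 := phiApprox_le hφ k x
      have h2 := phiApprox_ge hφ k x
      rw [← hg, ← hgt] at h2
      have h3 : |φ x| + |φ 0| + (|g 0| + (g 0 + gt 0)) * |x| ≥ 0 := by positivity
      constructor
      · have hmax : max (-x) 0 ≤ |x| := by
          apply max_le _ (by positivity)
          have := neg_abs_le x; linarith
        have hb1 : -(|φ 0|) ≤ φ 0 := neg_abs_le _
        have hb2 : -(|g 0| * |x|) ≤ g 0 * x := by
          have := neg_abs_le (g 0 * x)
          rw [abs_mul] at this; linarith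
        have hb3 : 0 ≤ (g 0 + gt 0) * max (-x) 0 :=
          mul_nonneg hc1 (le_max_right _ _)
        have hb4 : (g 0 + gt 0) * max (-x) 0 ≤ (g 0 + gt 0) * |x| :=
          mul_le_mul_of_nonneg_left hmax hc1
        nlinarith [abs_nonneg x, abs_nonneg (φ x), neg_abs_le (φ x)]
      · have := le_abs_self (φ x)
        nlinarith [abs_nonneg x, abs_nonneg (φ 0), mul_nonneg (add_nonneg (abs_nonneg (g 0)) hc1) (abs_nonneg x)]
    · filter_upwards with x
      exact phiApprox_tendsto hφ x
  exact le_of_tendsto_of_tendsto' (tends H hH hφH) (tends K hK hφK) step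

/-! ### Quantile function basics -/

open ProbabilityTheory

instance uniform01_prob : IsProbabilityMeasure uniform01 := by
  constructor
  rw [uniform01, Measure.restrict_apply' measurableSet_Ioo, Set.univ_inter, Real.volume_Ioo]
  norm_num

variable {F : Measure ℝ} [IsProbabilityMeasure F] {p : ℝ}

lemma quantile_eq_cdf (F : Measure ℝ) [IsProbabilityMeasure F] (p : ℝ) :
    quantile F p = sInf {x | p ≤ cdf F x} := by
  unfold quantile
  congr 1
  ext x
  simp only [Set.mem_setOf_eq, cdf_eq_real, measureReal_def]

lemma cdfSet_nonempty (hp1 : p < 1) : {x | p ≤ cdf F x}.Nonempty := by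
  have h := (tendsto_cdf_atTop F).eventually (eventually_ge_nhds hp1)
  exact h.exists

lemma cdfSet_bddBelow (hp0 : 0 < p) : BddBelow {x | p ≤ cdf F x} := by
  have h := (tendsto_cdf_atBot F).eventually (eventually_lt_nhds hp0)
  obtain ⟨x₀, hx₀⟩ := h.exists_forall_of_atBot
  refine ⟨x₀, fun y hy => ?_⟩
  by_contra hxy
  push_neg at hxy
  exact absurd hy (not_le.2 (hx₀ y hxy.le))

lemma le_cdf_quantile (hp0 : 0 < p) (hp1 : p < 1) : p ≤ cdf F (quantile F p) := by
  rw [quantile_eq_cdf]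
  set S := {x | p ≤ cdf F x} with hS
  set q := sInf S with hq
  have hne : S.Nonempty := cdfSet_nonempty hp1
  have hbdd : BddBelow S := cdfSet_bddBelow hp0
  have step : ∀ ε : ℝ, 0 < ε → p ≤ cdf F (q + ε) := by
    intro ε hε
    have h1 : sInf S < q + ε := by rw [← hq]; linarith [le_refl q]
    obtain ⟨y, hyS, hylt⟩ := (csInf_lt_iff hbdd hne).1 h1
    exact le_trans hyS (monotone_cdf F hylt.le)
  have seq : Tendsto (fun n : ℕ => q + 1/(n+1)) atTop (𝓝 q) := by
    have := tendsto_one_div_add_atTop_nhds_zero_nat (𝕜 := ℝ)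
    simpa using tendsto_const_nhds.add this
  have hmem : ∀ n : ℕ, q + 1/((n:ℝ)+1) ∈ Set.Ici q := by
    intro n
    have : (0:ℝ) < 1/((n:ℝ)+1) := by positivity
    simp only [Set.mem_Ici]; linarith
  have seq' : Tendsto (fun n : ℕ => cdf F (q + 1/(n+1))) atTop (𝓝 (cdf F q)) := by
    have hright := (cdf F).right_continuous q
    exact hright.tendsto.comp
      (tendsto_nhdsWithin_of_tendsto_nhds_of_eventually_within _ seq
        (Eventually.of_forall hmem))
  exact ge_of_tendsto seq' (Eventually.of_forall fun n => step _ (by positivity))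

lemma quantile_le_iff (hp0 : 0 < p) (hp1 : p < 1) {x : ℝ} :
    quantile F p ≤ x ↔ p ≤ cdf F x := by
  constructor
  · intro h
    exact le_trans (le_cdf_quantile hp0 hp1) (monotone_cdf F h)
  · intro h
    rw [quantile_eq_cdf]
    exact csInf_le (cdfSet_bddBelow hp0) h

lemma quantile_monotoneOn : MonotoneOn (quantile F) (Set.Ioo 0 1) := by
  intro u hu v hv huv
  rw [quantile_le_iff hu.1 hu.2]
  exact le_trans huv (le_cdf_quantile hv.1 hv.2)

lemma quantile_aemeasurable : AEMeasurable (quantile F) uniform01 := by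
  rw [uniform01]
  exact aemeasurable_restrict_of_monotoneOn measurableSet_Ioo quantile_monotoneOn

/-- Inverse transform sampling: the quantile pushes `uniform01` forward to `F`. -/
lemma map_quantile : uniform01.map (quantile F) = F := by
  have hae : AEMeasurable (quantile F) uniform01 := quantile_aemeasurable
  haveI : IsProbabilityMeasure (uniform01.map (quantile F)) :=
    Measure.isProbabilityMeasure_map hae
  apply Measure.ext_of_Iic
  intro x
  rw [Measure.map_apply_of_aemeasurable hae measurableSet_Iic]
  rw [uniform01, Measure.restrict_apply' measurableSet_Ioo]
  set c := cdf F x with hc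
  have hc0 : 0 ≤ c := cdf_nonneg F x
  have hc1 : c ≤ 1 := cdf_le_one F x
  have hsub1 : quantile F ⁻¹' Set.Iic x ∩ Set.Ioo 0 1 ⊆ Set.Ioc 0 c := by
    rintro u ⟨hu1, hu2⟩
    simp only [Set.mem_preimage, Set.mem_Iic] at hu1
    exact ⟨hu2.1, (quantile_le_iff hu2.1 hu2.2).1 hu1⟩
  have hsub2 : Set.Ioo 0 c ⊆ quantile F ⁻¹' Set.Iic x ∩ Set.Ioo 0 1 := by
    rintro u ⟨hu1, hu2⟩
    have hu3 : u < 1 := lt_of_lt_of_le hu2 hc1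
    refine ⟨?_, hu1, hu3⟩
    simp only [Set.mem_preimage, Set.mem_Iic]
    exact (quantile_le_iff hu1 hu3).2 hu2.le
  have h1 : volume (quantile F ⁻¹' Set.Iic x ∩ Set.Ioo 0 1) ≤ ENNReal.ofReal c := by
    calc volume _ ≤ volume (Set.Ioc 0 c) := measure_mono hsub1
      _ = ENNReal.ofReal c := by rw [Real.volume_Ioc, sub_zero]
  have h2 : ENNReal.ofReal c ≤ volume (quantile F ⁻¹' Set.Iic x ∩ Set.Ioo 0 1) := by
    calc ENNReal.ofReal c = volume (Set.Ioo 0 c) := by rw [Real.volume_Ioo, sub_zero]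
      _ ≤ _ := measure_mono hsub2
  rw [le_antisymm h1 h2, hc, ofReal_cdf]

lemma integral_comp_quantile {f : ℝ → ℝ} (hf : AEStronglyMeasurable f F) :
    ∫ y, f y ∂F = ∫ u, f (quantile F u) ∂uniform01 := by
  have h := integral_map (μ := uniform01) (φ := quantile F) quantile_aemeasurable (f := f)
    (by rw [map_quantile]; exact hf)
  rw [map_quantile] at h
  exact h

lemma integrable_comp_quantile {f : ℝ → ℝ} (hfm : AEStronglyMeasurable f F)
    (hf : Integrable f F) : Integrable (fun u => f (quantile F u)) uniform01 := by
  have h := integrable_map_measure (f := quantile F) (g := f) (μ := uniform01)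
    (by rw [map_quantile]; exact hfm) quantile_aemeasurable
  rw [map_quantile] at h
  exact h.1 hf

lemma integrable_quantile (hF : Integrable id F) :
    Integrable (fun u => quantile F u) uniform01 :=
  integrable_comp_quantile (f := id) hF.1 hF

/-! ### Null sets at the edges of the distribution -/

lemma null_cdf_zero (F : Measure ℝ) [IsProbabilityMeasure F] :
    F {y | cdf F y = 0} = 0 := by
  set S := {y | cdf F y = 0} with hS
  rcases S.eq_empty_or_nonempty with h | h
  · rw [h]; simp
  have hlow : ∀ y ∈ S, ∀ z ≤ y, z ∈ S := by
    intro y hy z hzy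
    have h1 : cdf F z ≤ cdf F y := monotone_cdf F hzy
    have h2 : 0 ≤ cdf F z := cdf_nonneg F z
    rw [hS, Set.mem_setOf_eq] at hy ⊢
    linarith
  have hIic : ∀ y ∈ S, F (Set.Iic y) = 0 := by
    intro y hy
    rw [hS, Set.mem_setOf_eq] at hy
    rw [← ofReal_cdf F y, hy, ENNReal.ofReal_zero]
  have hbdd : BddAbove S := by
    by_contra hb
    have hall : ∀ x, cdf F x = 0 := by
      intro x
      obtain ⟨y, hyS, hxy⟩ := not_bddAbove_iff.1 hb x
      exact hlow y hyS x hxy.le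
    have h1 : Tendsto (fun x : ℝ => (0:ℝ)) atTop (𝓝 1) :=
      (tendsto_congr hall).1 (tendsto_cdf_atTop F)
    have := tendsto_nhds_unique h1 tendsto_const_nhds
    norm_num at this
  set c := sSup S with hc
  by_cases hcS : c ∈ S
  · have hsub : S ⊆ Set.Iic c := fun y hy => le_csSup hbdd hy
    exact le_antisymm (le_trans (measure_mono hsub) (le_of_eq (hIic c hcS))) zero_le
  · have hsub : S ⊆ ⋃ n : ℕ, Set.Iic (c - 1/(n+1)) := by
      intro y hy
      have hyc : y < c := lt_of_le_of_ne (le_csSup hbdd hy) (fun h => hcS (h ▸ hy))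
      obtain ⟨n, hn⟩ := exists_nat_one_div_lt (by linarith : 0 < c - y)
      refine Set.mem_iUnion.2 ⟨n, ?_⟩
      simp only [Set.mem_Iic]
      push_cast at hn ⊢
      linarith
    have hnull : ∀ n : ℕ, F (Set.Iic (c - 1/(n+1))) = 0 := by
      intro n
      have hlt : c - 1/((n:ℝ)+1) < c := by
        have : (0:ℝ) < 1/((n:ℝ)+1) := by positivity
        linarith
      obtain ⟨z, hzS, hz⟩ := exists_lt_of_lt_csSup h hlt
      exact hIic _ (hlow z hzS _ hz.le)
    exact le_antisymm (le_trans (measure_mono hsub) (le_of_eq (measure_iUnion_null hnull)))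
      zero_le

lemma null_cdf_shift_one (F : Measure ℝ) [IsProbabilityMeasure F] {ε : ℝ} (hε : 0 < ε) :
    F {y | cdf F (y - ε) = 1} = 0 := by
  set S := {y | cdf F (y - ε) = 1} with hS
  rcases S.eq_empty_or_nonempty with h | h
  · rw [h]; simp
  have hupp : ∀ y ∈ S, ∀ z, y ≤ z → z ∈ S := by
    intro y hy z hzy
    have h1 : cdf F (y - ε) ≤ cdf F (z - ε) := monotone_cdf F (by linarith)
    have h2 : cdf F (z - ε) ≤ 1 := cdf_le_one F _
    rw [hS, Set.mem_setOf_eq] at hy ⊢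
    linarith
  have hIoi : ∀ y ∈ S, F (Set.Ioi (y - ε)) = 0 := by
    intro y hy
    rw [hS, Set.mem_setOf_eq] at hy
    have h1 : F (Set.Iic (y - ε)) = 1 := by
      rw [← ofReal_cdf F _, hy, ENNReal.ofReal_one]
    have h2 := measure_compl (μ := F) (measurableSet_Iic (a := y - ε)) (measure_ne_top F _)
    rw [Set.compl_Iic] at h2
    rw [h2, h1, measure_univ, tsub_self]
  have hbdd : BddBelow S := by
    by_contra hb
    have hall : ∀ x, cdf F x = 1 := by
      intro x
      obtain ⟨y, hyS, hxy⟩ := not_bddBelow_iff.1 hb (x + ε)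
      have := hupp y hyS (x + ε) hxy.le
      rw [hS, Set.mem_setOf_eq] at this
      simpa using this
    have h1 : Tendsto (fun x : ℝ => (1:ℝ)) atBot (𝓝 0) :=
      (tendsto_congr hall).1 (tendsto_cdf_atBot F)
    have := tendsto_nhds_unique h1 tendsto_const_nhds
    norm_num at this
  set c := sInf S with hc
  by_cases hcS : c ∈ S
  · have hsub : S ⊆ Set.Ioi (c - ε) := by
      intro y hy
      have : c ≤ y := csInf_le hbdd hy
      simp only [Set.mem_Ioi]; linarith
    exact le_antisymm (le_trans (measure_mono hsub) (le_of_eq (hIoi c hcS))) zero_le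
  · have hsub : S ⊆ ⋃ n : ℕ, Set.Ici (c + 1/(n+1)) := by
      intro y hy
      have hyc : c < y := lt_of_le_of_ne (csInf_le hbdd hy) (fun h => hcS (h ▸ hy))
      obtain ⟨n, hn⟩ := exists_nat_one_div_lt (by linarith : 0 < y - c)
      refine Set.mem_iUnion.2 ⟨n, ?_⟩
      simp only [Set.mem_Ici]
      push_cast at hn ⊢
      linarith
    have hnull : ∀ n : ℕ, F (Set.Ici (c + 1/(n+1))) = 0 := by
      intro n
      have hlt : c < c + 1/((n:ℝ)+1) := by
        have : (0:ℝ) < 1/((n:ℝ)+1) := by positivity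
        linarith
      obtain ⟨z, hzS, hz⟩ := exists_lt_of_csInf_lt h hlt
      have hsub2 : Set.Ici (c + 1/((n:ℝ)+1)) ⊆ Set.Ioi (z - ε) := by
        intro w hw
        simp only [Set.mem_Ici] at hw
        simp only [Set.mem_Ioi]
        linarith
      exact le_antisymm (le_trans (measure_mono hsub2) (le_of_eq (hIoi z hzS))) zero_le
    exact le_antisymm (le_trans (measure_mono hsub) (le_of_eq (measure_iUnion_null hnull)))
      zero_le

/-! ### The stop-loss inequality for the comonotonic sum -/

lemma integrable_hplus_comp {α : Type*} [MeasurableSpace α] {M : Measure α} [IsFiniteMeasure M]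
    {f : α → ℝ} (hf : Integrable f M) (t : ℝ) :
    Integrable (fun a => max (f a - t) 0) M := by
  apply Integrable.mono' (hf.abs.add (integrable_const |t|))
  · exact ((continuous_id.sub continuous_const).max continuous_const).comp_aestronglyMeasurable
      hf.1
  · filter_upwards with a
    rw [Real.norm_eq_abs]
    exact hplus_abs_le t (f a)

lemma max_sum_le {n : ℕ} (d : Fin n → ℝ) :
    max (∑ i, d i) 0 ≤ ∑ i, max (d i) 0 :=
  max_le (Finset.sum_le_sum fun i _ => le_max_left _ _)
    (Finset.sum_nonneg fun i _ => le_max_right _ _)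

section StopLoss

open ProbabilityTheory

variable {n : ℕ} {F : Fin n → Measure ℝ} {μ : Measure (Fin n → ℝ)}

lemma integrable_eval (hmarg : ∀ i, μ.map (fun x => x i) = F i)
    (hFint : ∀ i, Integrable id (F i)) (i : Fin n) :
    Integrable (fun x : Fin n → ℝ => x i) μ := by
  have h := integrable_map_measure (f := fun x : Fin n → ℝ => x i) (g := id) (μ := μ)
    (by rw [hmarg i]; exact aestronglyMeasurable_id) (measurable_pi_apply i).aemeasurable
  rw [hmarg i] at h
  exact h.1 (hFint i)

lemma integral_comp_eval (hmarg : ∀ i, μ.map (fun x => x i) = F i) {f : ℝ → ℝ} {i : Fin n}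
    (hfm : AEStronglyMeasurable f (F i)) :
    ∫ x, f (x i) ∂μ = ∫ y, f y ∂(F i) := by
  have h := integral_map (μ := μ) (φ := fun x : Fin n → ℝ => x i)
    (measurable_pi_apply i).aemeasurable (f := f) (by rw [hmarg i]; exact hfm)
  rw [hmarg i] at h
  exact h.symm

theorem stop_loss (hFp : ∀ i, IsProbabilityMeasure (F i)) (hFint : ∀ i, Integrable id (F i))
    (hμ : IsProbabilityMeasure μ) (hmarg : ∀ i, μ.map (fun x => x i) = F i) (t : ℝ) :
    ∫ x, max ((∑ i, x i) - t) 0 ∂μ ≤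
      ∫ u, max ((∑ i, quantile (F i) u) - t) 0 ∂uniform01 := by
  classical
  set q : Fin n → ℝ → ℝ := fun i u => quantile (F i) u with hq
  set s : ℝ → ℝ := fun u => ∑ i, q i u with hs
  have hqmono : ∀ i, MonotoneOn (q i) (Set.Ioo 0 1) := by
    intro i; haveI := hFp i; exact quantile_monotoneOn
  have hsmono : MonotoneOn s (Set.Ioo 0 1) := by
    intro u hu v hv huv
    exact Finset.sum_le_sum fun i _ => hqmono i hu hv huv
  have hqint : ∀ i, Integrable (q i) uniform01 := by
    intro i; haveI := hFp i; exact integrable_quantile (hFint i)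
  have hsint : Integrable s uniform01 := integrable_finset_sum _ (fun i _ => hqint i)
  have hxint : ∀ i, Integrable (fun x : Fin n → ℝ => x i) μ := integrable_eval hmarg hFint
  have hSint : Integrable (fun x : Fin n → ℝ => ∑ i, x i) μ :=
    integrable_finset_sum _ (fun i _ => hxint i)
  have hqi_le : ∀ (i : Fin n) {u : ℝ}, 0 < u → u < 1 → ∀ {y : ℝ},
      (q i u ≤ y ↔ u ≤ cdf (F i) y) := by
    intro i u hu0 hu1 y
    haveI := hFp i
    exact quantile_le_iff hu0 hu1
  have hmean_i : ∀ i, ∫ x, x i ∂μ = ∫ u, q i u ∂uniform01 := by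
    intro i
    haveI := hFp i
    have h1 : ∫ x, x i ∂μ = ∫ y, y ∂(F i) := integral_comp_eval hmarg aestronglyMeasurable_id
    rw [h1]
    exact integral_comp_quantile (f := fun y => y) aestronglyMeasurable_id
  have hae01 : ∀ᵐ u ∂uniform01, u ∈ Set.Ioo (0:ℝ) 1 := by
    rw [uniform01]
    exact ae_restrict_mem measurableSet_Ioo
  -- the cut point
  set p : ℝ := (volume {u | u ∈ Set.Ioo (0:ℝ) 1 ∧ s u ≤ t}).toReal with hp
  have hvol_ne_top : volume {u | u ∈ Set.Ioo (0:ℝ) 1 ∧ s u ≤ t} ≠ ⊤ := by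
    apply ne_top_of_le_ne_top (by norm_num : volume (Set.Ioo (0:ℝ) 1) ≠ ⊤)
    exact measure_mono (fun u hu => hu.1)
  have fact1 : ∀ u ∈ Set.Ioo (0:ℝ) 1, u < p → s u ≤ t := by
    intro u hu hup
    by_contra hc
    push_neg at hc
    have hsub : {v | v ∈ Set.Ioo (0:ℝ) 1 ∧ s v ≤ t} ⊆ Set.Ioo 0 u := by
      rintro v ⟨hv, hvt⟩
      rcases lt_or_ge v u with h | h
      · exact ⟨hv.1, h⟩
      · exact absurd (hsmono hu hv h) (by linarith)
    have := measure_mono (μ := volume) hsub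
    rw [Real.volume_Ioo, sub_zero] at this
    have h2 : p ≤ u := by
      rw [hp]
      calc (volume {v | v ∈ Set.Ioo (0:ℝ) 1 ∧ s v ≤ t}).toReal
          ≤ (ENNReal.ofReal u).toReal := ENNReal.toReal_mono (by simp) this
        _ = u := ENNReal.toReal_ofReal hu.1.le
    linarith
  have fact2 : ∀ u ∈ Set.Ioo (0:ℝ) 1, p < u → t < s u := by
    intro u hu hup
    by_contra hc
    push_neg at hc
    have hsub : Set.Ioo 0 u ⊆ {v | v ∈ Set.Ioo (0:ℝ) 1 ∧ s v ≤ t} := by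
      rintro v ⟨hv0, hvu⟩
      have hv : v ∈ Set.Ioo (0:ℝ) 1 := ⟨hv0, hvu.trans hu.2⟩
      exact ⟨hv, le_trans (hsmono hv hu hvu.le) hc⟩
    have := measure_mono (μ := volume) hsub
    rw [Real.volume_Ioo, sub_zero] at this
    have h2 : u ≤ p := by
      rw [hp]
      calc u = (ENNReal.ofReal u).toReal := (ENNReal.toReal_ofReal hu.1.le).symm
        _ ≤ _ := ENNReal.toReal_mono hvol_ne_top this
    linarith
  rcases le_or_gt p 0 with hp0 | hp0
  · -- case p = 0 : t is below the essential infimum of the comonotonic sum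
    have hstrict : ∀ u ∈ Set.Ioo (0:ℝ) 1, t < s u := fun u hu => fact2 u hu (lt_of_le_of_lt hp0 hu.1)
    have hbad : μ {x | ∃ i, cdf (F i) (x i) = 0} = 0 := by
      have he : {x : Fin n → ℝ | ∃ i, cdf (F i) (x i) = 0}
          = ⋃ i, (fun x : Fin n → ℝ => x i) ⁻¹' {y | cdf (F i) y = 0} := by
        ext x; simp [Set.mem_iUnion]
      rw [he]
      apply measure_iUnion_null
      intro i
      have hmeas : MeasurableSet {y | cdf (F i) y = 0} :=
        (monotone_cdf (F i)).measurable (measurableSet_singleton 0)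
      haveI := hFp i
      rw [← Measure.map_apply (measurable_pi_apply i) hmeas, hmarg i]
      exact null_cdf_zero (F i)
    have hmain : ∀ᵐ x ∂μ, t ≤ ∑ i, x i := by
      rw [← compl_mem_ae_iff] at hbad
      filter_upwards [hbad] with x hx
      simp only [Set.mem_compl_iff, Set.mem_setOf_eq, not_exists] at hx
      set T : Finset ℝ := insert (1/2 : ℝ) (Finset.image (fun i => cdf (F i) (x i)) Finset.univ)
        with hT
      have hTne : T.Nonempty := ⟨1/2, Finset.mem_insert_self _ _⟩
      set u := T.min' hTne with hu
      have hu_mem := T.min'_mem hTne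
      have hu0 : 0 < u := by
        rw [hu]
        rcases Finset.mem_insert.1 hu_mem with h | h
        · rw [← hu] at h ⊢; rw [h]; norm_num
        · obtain ⟨i, _, hi⟩ := Finset.mem_image.1 h
          rw [← hu] at hi ⊢
          rw [← hi]
          exact lt_of_le_of_ne (cdf_nonneg (F i) (x i)) (Ne.symm (hx i))
      have hu12 : u ≤ 1/2 := Finset.min'_le _ _ (Finset.mem_insert_self _ _)
      have hu1 : u < 1 := by linarith
      have hcdf : ∀ i, u ≤ cdf (F i) (x i) := by
        intro i
        exact Finset.min'_le _ _ (Finset.mem_insert_of_mem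
          (Finset.mem_image_of_mem _ (Finset.mem_univ i)))
      have hqle : ∀ i, q i u ≤ x i := fun i => (hqi_le i hu0 hu1).2 (hcdf i)
      have h1 : s u ≤ ∑ i, x i := Finset.sum_le_sum fun i _ => hqle i
      have h2 : t < s u := hstrict u ⟨hu0, hu1⟩
      linarith
    have hLHS : ∫ x, max ((∑ i, x i) - t) 0 ∂μ = (∑ i, ∫ x, x i ∂μ) - t := by
      have he : (fun x : Fin n → ℝ => max ((∑ i, x i) - t) 0)
          =ᵐ[μ] fun x => (∑ i, x i) - t := by
        filter_upwards [hmain] with x hx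
        exact max_eq_left (by linarith)
      rw [integral_congr_ae he, integral_sub hSint (integrable_const t), integral_const,
        integral_finset_sum _ (fun i _ => hxint i)]
      simp [measure_univ]
    have hRHS : ∫ u, max (s u - t) 0 ∂uniform01 = (∑ i, ∫ u, q i u ∂uniform01) - t := by
      have he : (fun u => max (s u - t) 0) =ᵐ[uniform01] fun u => s u - t := by
        filter_upwards [hae01] with u hu
        exact max_eq_left (by linarith [hstrict u hu])
      rw [integral_congr_ae he, integral_sub hsint (integrable_const t), integral_const,
        integral_finset_sum _ (fun i _ => hqint i)]
      simp [measure_univ]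
    rw [hLHS, hRHS]
    apply le_of_eq
    congr 1
    exact Finset.sum_congr rfl fun i _ => hmean_i i
  rcases le_or_gt 1 p with hp1 | hp1
  · -- case p = 1 : t is above the essential supremum of the comonotonic sum
    have hle : ∀ u ∈ Set.Ioo (0:ℝ) 1, s u ≤ t := fun u hu => fact1 u hu (lt_of_lt_of_le hu.2 hp1)
    have hRHS : ∫ u, max (s u - t) 0 ∂uniform01 = 0 := by
      have he : (fun u => max (s u - t) 0) =ᵐ[uniform01] fun _ => (0:ℝ) := by
        filter_upwards [hae01] with u hu
        exact max_eq_right (by linarith [hle u hu])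
      rw [integral_congr_ae he, integral_zero]
    have hmain : ∀ᵐ x ∂μ, (∑ i, x i) ≤ t := by
      have hm : ∀ m : ℕ, ∀ᵐ x ∂μ, (∑ i, x i) ≤ t + n * (1/(m+1)) := by
        intro m
        set ε : ℝ := 1/(m+1) with hε
        have hε0 : 0 < ε := by positivity
        have hbad : μ {x | ∃ i, cdf (F i) (x i - ε) = 1} = 0 := by
          have he : {x : Fin n → ℝ | ∃ i, cdf (F i) (x i - ε) = 1}
              = ⋃ i, (fun x : Fin n → ℝ => x i) ⁻¹' {y | cdf (F i) (y - ε) = 1} := by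
            ext x; simp [Set.mem_iUnion]
          rw [he]
          apply measure_iUnion_null
          intro i
          have hmeas : MeasurableSet {y | cdf (F i) (y - ε) = 1} :=
            ((monotone_cdf (F i)).measurable.comp (measurable_id.sub measurable_const))
              (measurableSet_singleton 1)
          haveI := hFp i
          rw [← Measure.map_apply (measurable_pi_apply i) hmeas, hmarg i]
          exact null_cdf_shift_one (F i) hε0
        rw [← compl_mem_ae_iff] at hbad
        filter_upwards [hbad] with x hx
        simp only [Set.mem_compl_iff, Set.mem_setOf_eq, not_exists] at hx
        set T : Finset ℝ := insert (1/2 : ℝ)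
          (Finset.image (fun i => cdf (F i) (x i - ε)) Finset.univ) with hT
        have hTne : T.Nonempty := ⟨1/2, Finset.mem_insert_self _ _⟩
        set M0 := T.max' hTne with hM0
        have hM0lt1 : M0 < 1 := by
          rw [hM0]
          apply Finset.max'_lt_iff T hTne |>.2
          intro y hy
          rcases Finset.mem_insert.1 hy with h | h
          · rw [h]; norm_num
          · obtain ⟨i, _, hi⟩ := Finset.mem_image.1 h
            rw [← hi]
            exact lt_of_le_of_ne (cdf_le_one (F i) _) (hx i)
        have hM012 : (1/2 : ℝ) ≤ M0 := Finset.le_max' _ _ (Finset.mem_insert_self _ _)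
        set u := (1 + M0)/2 with hudef
        have hu0 : 0 < u := by rw [hudef]; linarith
        have hu1 : u < 1 := by rw [hudef]; linarith
        have hugt : ∀ i, cdf (F i) (x i - ε) < u := by
          intro i
          have h1 : cdf (F i) (x i - ε) ≤ M0 :=
            Finset.le_max' T _ (Finset.mem_insert_of_mem
              (Finset.mem_image_of_mem (fun i => cdf (F i) (x i - ε)) (Finset.mem_univ i)))
          rw [hudef]; linarith
        have hqgt : ∀ i, x i - ε < q i u := by
          intro i
          by_contra hc
          push_neg at hc
          exact absurd ((hqi_le i hu0 hu1).1 hc) (not_le.2 (hugt i))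
        have h1 : ∑ i, x i ≤ ∑ i, (q i u + ε) :=
          Finset.sum_le_sum fun i _ => by linarith [hqgt i]
        have h2 : ∑ i, (q i u + ε) = s u + n * ε := by
          rw [Finset.sum_add_distrib, Finset.sum_const, Finset.card_univ, Fintype.card_fin,
            nsmul_eq_mul]
        have h3 : s u ≤ t := hle u ⟨hu0, hu1⟩
        rw [hε] at h1
        have h4 : (∑ i, x i) ≤ t + ↑n * (1/((m:ℝ)+1)) := by
          rw [← hε]
          linarith
        exact h4
      have hall : ∀ᵐ x ∂μ, ∀ m : ℕ, (∑ i, x i) ≤ t + n * (1/(m+1)) := ae_all_iff.2 hm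
      filter_upwards [hall] with x hx
      have htends : Tendsto (fun m : ℕ => t + n * (1/((m:ℝ)+1))) atTop (𝓝 t) := by
        have h0 : Tendsto (fun m : ℕ => (n:ℝ) * (1/((m:ℝ)+1))) atTop (𝓝 0) := by
          simpa [mul_comm] using tendsto_one_div_add_atTop_nhds_zero_nat.mul_const (n:ℝ)
        simpa using tendsto_const_nhds.add h0
      exact ge_of_tendsto htends (Eventually.of_forall fun m => hx m)
    have hLHS : ∫ x, max ((∑ i, x i) - t) 0 ∂μ = 0 := by
      have he : (fun x : Fin n → ℝ => max ((∑ i, x i) - t) 0) =ᵐ[μ] fun _ => (0:ℝ) := by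
        filter_upwards [hmain] with x hx
        exact max_eq_right (by linarith)
      rw [integral_congr_ae he, integral_zero]
    rw [hLHS, hRHS]
  · -- middle case : 0 < p < 1
    have hp05 : p/2 ∈ Set.Ioo (0:ℝ) 1 := ⟨by linarith, by linarith⟩
    have hp15 : (p+1)/2 ∈ Set.Ioo (0:ℝ) 1 := ⟨by linarith, by linarith⟩
    have hIooSub1 : Set.Ioo (0:ℝ) p ⊆ Set.Ioo (0:ℝ) 1 := fun v hv => ⟨hv.1, hv.2.trans hp1⟩
    have hIooSub2 : Set.Ioo p 1 ⊆ Set.Ioo (0:ℝ) 1 := fun v hv => ⟨hp0.trans hv.1, hv.2⟩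
    have hA : ∀ i, BddAbove (q i '' Set.Ioo 0 p) := by
      intro i
      refine ⟨q i ((p+1)/2), ?_⟩
      rintro y ⟨v, hv, rfl⟩
      exact hqmono i (hIooSub1 hv) hp15 (by linarith [hv.2])
    have hB : ∀ i, BddBelow (q i '' Set.Ioo p 1) := by
      intro i
      refine ⟨q i (p/2), ?_⟩
      rintro y ⟨v, hv, rfl⟩
      exact hqmono i hp05 (hIooSub2 hv) (by linarith [hv.1])
    have hneA : ∀ i, (q i '' Set.Ioo 0 p).Nonempty := by
      intro i
      exact ⟨q i (p/2), Set.mem_image_of_mem _ ⟨by linarith, by linarith⟩⟩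
    have hneB : ∀ i, (q i '' Set.Ioo p 1).Nonempty := by
      intro i
      exact ⟨q i ((p+1)/2), Set.mem_image_of_mem _ ⟨by linarith, by linarith⟩⟩
    set qm : Fin n → ℝ := fun i => sSup (q i '' Set.Ioo 0 p) with hqm
    set qp : Fin n → ℝ := fun i => sInf (q i '' Set.Ioo p 1) with hqp
    have hqmu : ∀ i, ∀ u ∈ Set.Ioo (0:ℝ) p, q i u ≤ qm i :=
      fun i u hu => le_csSup (hA i) (Set.mem_image_of_mem _ hu)
    have hqpu : ∀ i, ∀ u ∈ Set.Ioo p 1, qp i ≤ q i u :=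
      fun i u hu => csInf_le (hB i) (Set.mem_image_of_mem _ hu)
    have hqmqp : ∀ i, qm i ≤ qp i := by
      intro i
      apply csSup_le (hneA i)
      rintro y ⟨u, hu, rfl⟩
      apply le_csInf (hneB i)
      rintro z ⟨v, hv, rfl⟩
      exact hqmono i (hIooSub1 hu) (hIooSub2 hv) (by linarith [hu.2, hv.1])
    have hsm : (∑ i, qm i) ≤ t := by
      apply le_of_forall_pos_le_add
      intro ε hε
      have hex : ∀ i, ∃ v ∈ Set.Ioo (0:ℝ) p, qm i - ε/(n+1) < q i v := by
        intro i
        have h1 : qm i - ε/(n+1) < qm i := by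
          have : (0:ℝ) < ε/(n+1) := by positivity
          linarith
        obtain ⟨y, ⟨v, hv, rfl⟩, hy⟩ := exists_lt_of_lt_csSup (hneA i) h1
        exact ⟨v, hv, hy⟩
      choose v hv hqv using hex
      set T : Finset ℝ := insert (p/2) (Finset.image v Finset.univ) with hT
      have hTne : T.Nonempty := ⟨p/2, Finset.mem_insert_self _ _⟩
      set u := T.max' hTne with hu
      have humem := T.max'_mem hTne
      have hu_in : u ∈ Set.Ioo (0:ℝ) p := by
        rw [hu]
        rcases Finset.mem_insert.1 humem with h | h
        · rw [h]; exact ⟨by linarith, by linarith⟩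
        · obtain ⟨i, _, hi⟩ := Finset.mem_image.1 h
          rw [← hi]; exact hv i
      have huge : ∀ i, v i ≤ u :=
        fun i => Finset.le_max' _ _ (Finset.mem_insert_of_mem
          (Finset.mem_image_of_mem _ (Finset.mem_univ i)))
      have h2 : ∀ i, qm i - ε/(n+1) < q i u := by
        intro i
        exact lt_of_lt_of_le (hqv i) (hqmono i (hIooSub1 (hv i)) (hIooSub1 hu_in) (huge i))
      have h3 : ∑ i, qm i ≤ s u + n * (ε/(n+1)) := by
        have := Finset.sum_le_sum (f := fun i => qm i - ε/(n+1)) (g := fun i => q i u)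
          (s := Finset.univ) (fun i _ => (h2 i).le)
        rw [Finset.sum_sub_distrib, Finset.sum_const, Finset.card_univ, Fintype.card_fin,
          nsmul_eq_mul] at this
        linarith
      have h4 : s u ≤ t := fact1 u (hIooSub1 hu_in) hu_in.2
      have h5 : (n:ℝ) * (ε/(n+1)) ≤ ε := by
        rw [mul_div_assoc']
        rw [div_le_iff₀ (by positivity : (0:ℝ) < (n:ℝ)+1)]
        nlinarith [Nat.cast_nonneg (α := ℝ) n]
      linarith
    have hsp : t ≤ (∑ i, qp i) := by
      apply le_of_forall_pos_le_add
      intro ε hε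
      have hex : ∀ i, ∃ v ∈ Set.Ioo p 1, q i v < qp i + ε/(n+1) := by
        intro i
        have h1 : qp i < qp i + ε/(n+1) := by
          have : (0:ℝ) < ε/(n+1) := by positivity
          linarith
        obtain ⟨y, ⟨v, hv, rfl⟩, hy⟩ := exists_lt_of_csInf_lt (hneB i) h1
        exact ⟨v, hv, hy⟩
      choose v hv hqv using hex
      set T : Finset ℝ := insert ((p+1)/2) (Finset.image v Finset.univ) with hT
      have hTne : T.Nonempty := ⟨(p+1)/2, Finset.mem_insert_self _ _⟩
      set u := T.min' hTne with hu
      have humem := T.min'_mem hTne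
      have hu_in : u ∈ Set.Ioo p 1 := by
        rw [hu]
        rcases Finset.mem_insert.1 humem with h | h
        · rw [h]; exact ⟨by linarith, by linarith⟩
        · obtain ⟨i, _, hi⟩ := Finset.mem_image.1 h
          rw [← hi]; exact hv i
      have hule : ∀ i, u ≤ v i :=
        fun i => Finset.min'_le _ _ (Finset.mem_insert_of_mem
          (Finset.mem_image_of_mem _ (Finset.mem_univ i)))
      have h2 : ∀ i, q i u < qp i + ε/(n+1) := by
        intro i
        exact lt_of_le_of_lt (hqmono i (hIooSub2 hu_in) (hIooSub2 (hv i)) (hule i)) (hqv i)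
      have h3 : s u ≤ (∑ i, qp i) + n * (ε/(n+1)) := by
        have := Finset.sum_le_sum (f := fun i => q i u) (g := fun i => qp i + ε/(n+1))
          (s := Finset.univ) (fun i _ => (h2 i).le)
        rw [Finset.sum_add_distrib, Finset.sum_const, Finset.card_univ, Fintype.card_fin,
          nsmul_eq_mul] at this
        linarith
      have h4 : t < s u := fact2 u (hIooSub2 hu_in) hu_in.1
      have h5 : (n:ℝ) * (ε/(n+1)) ≤ ε := by
        rw [mul_div_assoc']
        rw [div_le_iff₀ (by positivity : (0:ℝ) < (n:ℝ)+1)]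
        nlinarith [Nat.cast_nonneg (α := ℝ) n]
      linarith
    -- the interpolated thresholds
    set d : ℝ := (∑ i, qp i) - (∑ i, qm i) with hd
    have hd0 : 0 ≤ d := by rw [hd]; linarith
    set θ : ℝ := if d = 0 then 1 else ((∑ i, qp i) - t)/d with hθ
    have hθ0 : 0 ≤ θ := by
      rw [hθ]
      split_ifs with h
      · norm_num
      · apply div_nonneg (by linarith) hd0
    have hθ1 : θ ≤ 1 := by
      rw [hθ]
      split_ifs with h
      · exact le_refl 1
      · rw [div_le_one (lt_of_le_of_ne hd0 (Ne.symm h))]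
        rw [hd]; linarith
    set tt : Fin n → ℝ := fun i => θ * qm i + (1-θ) * qp i with htt
    have hsum_tt : ∑ i, tt i = t := by
      rw [htt]
      simp only []
      rw [Finset.sum_add_distrib, ← Finset.mul_sum, ← Finset.mul_sum]
      rw [hθ]
      split_ifs with h
      · have h1 : (∑ i, qp i) = (∑ i, qm i) := by rw [hd] at h; linarith
        have h2 : t = ∑ i, qm i := by rw [h1] at hsp; linarith
        rw [h1, ← h2]; ring
      · have hdne : d ≠ 0 := h
        field_simp
        rw [hd]
        ring
    have htt_low : ∀ i, qm i ≤ tt i := by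
      intro i
      rw [htt]
      simp only []
      nlinarith [hqmqp i]
    have htt_up : ∀ i, tt i ≤ qp i := by
      intro i
      rw [htt]
      simp only []
      nlinarith [hqmqp i]
    -- chain of inequalities
    have hstep1 : ∫ x, max ((∑ i, x i) - t) 0 ∂μ
        ≤ ∫ x, (∑ i, max (x i - tt i) 0) ∂μ := by
      apply integral_mono (integrable_hplus_comp hSint t)
        (integrable_finset_sum _ fun i _ => integrable_hplus_comp (hxint i) _)
      intro x
      show max ((∑ i, x i) - t) 0 ≤ ∑ i, max (x i - tt i) 0
      have he : (∑ i, x i) - t = ∑ i, (x i - tt i) := by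
        rw [Finset.sum_sub_distrib, hsum_tt]
      rw [he]
      exact max_sum_le _
    have hstep2 : ∫ x, (∑ i, max (x i - tt i) 0) ∂μ
        = ∑ i, ∫ u, max (q i u - tt i) 0 ∂uniform01 := by
      rw [integral_finset_sum _ (fun i _ => integrable_hplus_comp (hxint i) _)]
      apply Finset.sum_congr rfl
      intro i _
      haveI := hFp i
      have hcont : Continuous (fun y : ℝ => max (y - tt i) 0) :=
        (continuous_id.sub continuous_const).max continuous_const
      rw [integral_comp_eval hmarg (f := fun y => max (y - tt i) 0) hcont.aestronglyMeasurable]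
      exact integral_comp_quantile hcont.aestronglyMeasurable
    have hstep3 : (∑ i, ∫ u, max (q i u - tt i) 0 ∂uniform01)
        = ∫ u, (∑ i, max (q i u - tt i) 0) ∂uniform01 := by
      rw [integral_finset_sum _ (fun i _ => integrable_hplus_comp (hqint i) _)]
    have hstep4 : ∫ u, (∑ i, max (q i u - tt i) 0) ∂uniform01
        = ∫ u, max (s u - t) 0 ∂uniform01 := by
      apply integral_congr_ae
      have hpnull : ∀ᵐ u ∂uniform01, u ≠ p := by
        have h0 : uniform01 {p} = 0 := by
          rw [uniform01, Measure.restrict_apply' measurableSet_Ioo]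
          exact le_antisymm (le_trans (measure_mono (Set.inter_subset_left))
            (le_of_eq (Real.volume_singleton))) zero_le
        apply ae_iff.2
        simp only [ne_eq, not_not]
        rw [show {a : ℝ | a = p} = {p} from Set.setOf_eq_eq_singleton]
        exact h0
      filter_upwards [hae01, hpnull] with u hu hup
      rcases lt_or_gt_of_ne hup with h | h
      · have h1 : ∀ i, max (q i u - tt i) 0 = 0 := by
          intro i
          apply max_eq_right
          have := hqmu i u ⟨hu.1, h⟩
          linarith [htt_low i]
        have h2 : max (s u - t) 0 = 0 := by
          apply max_eq_right
          linarith [fact1 u hu h]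
        rw [h2, Finset.sum_congr rfl (fun i _ => h1 i), Finset.sum_const_zero]
      · have h1 : ∀ i, max (q i u - tt i) 0 = q i u - tt i := by
          intro i
          apply max_eq_left
          have := hqpu i u ⟨h, hu.2⟩
          linarith [htt_up i]
        have h2 : max (s u - t) 0 = s u - t := by
          apply max_eq_left
          linarith [fact2 u hu h]
        rw [h2, Finset.sum_congr rfl (fun i _ => h1 i), Finset.sum_sub_distrib, hsum_tt]
    calc ∫ x, max ((∑ i, x i) - t) 0 ∂μ
        ≤ ∫ x, (∑ i, max (x i - tt i) 0) ∂μ := hstep1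
      _ = ∑ i, ∫ u, max (q i u - tt i) 0 ∂uniform01 := hstep2
      _ = ∫ u, (∑ i, max (q i u - tt i) 0) ∂uniform01 := hstep3
      _ = ∫ u, max (s u - t) 0 ∂uniform01 := hstep4

end StopLoss

/-! ### The comonotonic sum: membership in the aggregation set and convex-order domination -/

section Comono

open ProbabilityTheory

variable {n : ℕ} {F : Fin n → Measure ℝ}

lemma aemeasurable_pi_of_aemeasurable {α : Type*} [MeasurableSpace α] {m : ℕ}
    {M : Measure α} {f : α → Fin m → ℝ} (hf : ∀ i, AEMeasurable (fun u => f u i) M) :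
    AEMeasurable f M := by
  choose g hgm hge using fun i => hf i
  refine ⟨fun u i => g i u, measurable_pi_lambda _ hgm, ?_⟩
  have hall := ae_all_iff.2 hge
  filter_upwards [hall] with u hu
  funext i
  exact hu i

lemma comono_aemeasurable (hFp : ∀ i, IsProbabilityMeasure (F i)) :
    AEMeasurable (fun u => ∑ i, quantile (F i) u) uniform01 := by
  apply Finset.aemeasurable_fun_sum
  intro i _
  haveI := hFp i
  exact quantile_aemeasurable

instance : IsProbabilityMeasure uniform01 := uniform01_prob

lemma comono_prob (hFp : ∀ i, IsProbabilityMeasure (F i)) :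
    IsProbabilityMeasure (comonoSum n F) := by
  rw [comonoSum]
  exact Measure.isProbabilityMeasure_map (comono_aemeasurable hFp)

lemma comono_integrable (hFp : ∀ i, IsProbabilityMeasure (F i))
    (hFint : ∀ i, Integrable id (F i)) :
    Integrable id (comonoSum n F) := by
  rw [comonoSum]
  have hs : Integrable (fun u => ∑ i, quantile (F i) u) uniform01 :=
    integrable_finset_sum _ (fun i _ => by
      haveI := hFp i; exact integrable_quantile (hFint i))
  refine (integrable_map_measure aestronglyMeasurable_id (comono_aemeasurable hFp)).2 hs

lemma integral_id_comono (hFp : ∀ i, IsProbabilityMeasure (F i))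
    (hFint : ∀ i, Integrable id (F i)) :
    ∫ x, x ∂(comonoSum n F) = ∫ u, (∑ i, quantile (F i) u) ∂uniform01 := by
  rw [comonoSum]
  exact integral_map (comono_aemeasurable hFp)
    (by
      rw [← comonoSum]
      exact (comono_integrable hFp hFint).1)

lemma comono_mem_aggSet (hFp : ∀ i, IsProbabilityMeasure (F i)) :
    comonoSum n F ∈ aggSet n F := by
  classical
  set vec : ℝ → (Fin n → ℝ) := fun u => fun i => quantile (F i) u with hvec
  have hvec_ae : AEMeasurable vec uniform01 := by
    apply aemeasurable_pi_of_aemeasurable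
    intro i
    haveI := hFp i
    exact quantile_aemeasurable
  set μ0 := uniform01.map vec with hμ0
  haveI : IsProbabilityMeasure μ0 := Measure.isProbabilityMeasure_map hvec_ae
  refine ⟨μ0, inferInstance, fun i => ?_, ?_⟩
  · rw [hμ0, AEMeasurable.map_map_of_aemeasurable (measurable_pi_apply i).aemeasurable hvec_ae]
    haveI := hFp i
    exact map_quantile
  · have hsum : Measurable (fun x : Fin n → ℝ => ∑ i, x i) :=
      Finset.measurable_sum _ (fun i _ => measurable_pi_apply i)
    rw [hμ0, AEMeasurable.map_map_of_aemeasurable hsum.aemeasurable hvec_ae]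
    rfl

/-- Any element of the aggregation set is a finite-mean probability measure dominated by the
comonotonic sum in convex order. -/
theorem aggSet_convexOrder (hFp : ∀ i, IsProbabilityMeasure (F i))
    (hFint : ∀ i, Integrable id (F i)) {H : Measure ℝ} (hH : H ∈ aggSet n F) :
    IsProbabilityMeasure H ∧ Integrable id H ∧ ConvexOrder H (comonoSum n F) := by
  obtain ⟨μ, hμprob, hmarg, rfl⟩ := hH
  haveI := hμprob
  have hSmeas : Measurable (fun x : Fin n → ℝ => ∑ i, x i) :=
    Finset.measurable_sum _ (fun i _ => measurable_pi_apply i)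
  have hxint : ∀ i, Integrable (fun x : Fin n → ℝ => x i) μ := integrable_eval hmarg hFint
  have hSint : Integrable (fun x : Fin n → ℝ => ∑ i, x i) μ :=
    integrable_finset_sum _ (fun i _ => hxint i)
  have hsq : Integrable (fun u => ∑ i, quantile (F i) u) uniform01 :=
    integrable_finset_sum _ (fun i _ => by
      haveI := hFp i; exact integrable_quantile (hFint i))
  haveI hHprob : IsProbabilityMeasure (μ.map (fun x : Fin n → ℝ => ∑ i, x i)) :=
    Measure.isProbabilityMeasure_map hSmeas.aemeasurable
  haveI hKprob : IsProbabilityMeasure (comonoSum n F) := comono_prob hFp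
  have hHint : Integrable id (μ.map (fun x : Fin n → ℝ => ∑ i, x i)) :=
    (integrable_map_measure aestronglyMeasurable_id hSmeas.aemeasurable).2 hSint
  have hKint : Integrable id (comonoSum n F) := comono_integrable hFp hFint
  refine ⟨hHprob, hHint, ?_⟩
  intro φ hφ hφH hφK
  -- reduce to the cut criterion
  apply cutCriterion hHint hKint ?_ ?_ hφ hφH hφK
  · -- equal means
    have h1 : ∫ x, x ∂(μ.map (fun x : Fin n → ℝ => ∑ i, x i)) = ∫ x, (∑ i, x i) ∂μ :=
      integral_map hSmeas.aemeasurable hHint.1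
    have h2 := integral_id_comono hFp hFint
    rw [h1, h2, integral_finset_sum _ (fun i _ => hxint i),
      integral_finset_sum _ (fun i _ => by haveI := hFp i; exact integrable_quantile (hFint i))]
    apply Finset.sum_congr rfl
    intro i _
    haveI := hFp i
    have h3 : ∫ x, x i ∂μ = ∫ y, y ∂(F i) :=
      integral_comp_eval hmarg aestronglyMeasurable_id
    rw [h3]
    exact integral_comp_quantile (f := fun y => y) aestronglyMeasurable_id
  · -- stop-loss comparison
    intro t
    have hcont : Continuous (fun y : ℝ => max (y - t) 0) :=
      (continuous_id.sub continuous_const).max continuous_const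
    have h1 : ∫ y, max (y - t) 0 ∂(μ.map (fun x : Fin n → ℝ => ∑ i, x i))
        = ∫ x, max ((∑ i, x i) - t) 0 ∂μ :=
      integral_map hSmeas.aemeasurable hcont.aestronglyMeasurable
    have h2 : ∫ y, max (y - t) 0 ∂(comonoSum n F)
        = ∫ u, max ((∑ i, quantile (F i) u) - t) 0 ∂uniform01 := by
      rw [comonoSum]
      exact integral_map (comono_aemeasurable hFp) hcont.aestronglyMeasurable
    rw [h1, h2]
    exact stop_loss hFp hFint hμprob hmarg t

end Comono

/-! ### Quantile mixtures -/

section QuantileMix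

open ProbabilityTheory

lemma ae01 : ∀ᵐ u ∂uniform01, u ∈ Set.Ioo (0:ℝ) 1 := by
  rw [uniform01]
  exact ae_restrict_mem measurableSet_Ioo

/-- For a function monotone on (0,1), the quantile function of the pushforward of the
uniform distribution recovers the function a.e. -/
lemma quantile_map_monotoneOn {g : ℝ → ℝ} (hg : MonotoneOn g (Set.Ioo 0 1))
    (hgae : AEMeasurable g uniform01) :
    ∀ᵐ u ∂uniform01, quantile (uniform01.map g) u = g u := by
  set G := uniform01.map g with hG
  haveI : IsProbabilityMeasure G := Measure.isProbabilityMeasure_map hgae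
  -- Step A: at good points the quantile equals g
  have stepA : ∀ u ∈ Set.Ioo (0:ℝ) 1,
      (∀ x, x < g u → ∃ u' ∈ Set.Ioo (0:ℝ) 1, u' < u ∧ x < g u') →
      quantile G u = g u := by
    intro u hu hgood
    have hGIic : ∀ x, G (Set.Iic x) = volume ((g ⁻¹' Set.Iic x) ∩ Set.Ioo 0 1) := by
      intro x
      rw [hG, Measure.map_apply_of_aemeasurable hgae measurableSet_Iic, uniform01,
        Measure.restrict_apply' measurableSet_Ioo]
    have claim1 : ∀ x, g u ≤ x → u ≤ (G (Set.Iic x)).toReal := by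
      intro x hx
      have hsub : Set.Ioo 0 u ⊆ (g ⁻¹' Set.Iic x) ∩ Set.Ioo 0 1 := by
        rintro v ⟨hv0, hvu⟩
        have hv : v ∈ Set.Ioo (0:ℝ) 1 := ⟨hv0, hvu.trans hu.2⟩
        exact ⟨le_trans (hg hv hu hvu.le) hx, hv⟩
      have h1 := measure_mono (μ := volume) hsub
      rw [Real.volume_Ioo, sub_zero] at h1
      rw [hGIic]
      calc u = (ENNReal.ofReal u).toReal := (ENNReal.toReal_ofReal hu.1.le).symm
        _ ≤ _ := ENNReal.toReal_mono
            (ne_top_of_le_ne_top (by norm_num : volume (Set.Ioo (0:ℝ) 1) ≠ ⊤)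
              (measure_mono Set.inter_subset_right)) h1
    have claim2 : ∀ x, x < g u → (G (Set.Iic x)).toReal < u := by
      intro x hx
      obtain ⟨u', hu', hu'u, hxu'⟩ := hgood x hx
      have hsub : (g ⁻¹' Set.Iic x) ∩ Set.Ioo 0 1 ⊆ Set.Ioo 0 u' := by
        rintro v ⟨hvx, hv⟩
        simp only [Set.mem_preimage, Set.mem_Iic] at hvx
        constructor
        · exact hv.1
        · by_contra hc
          push_neg at hc
          exact absurd (le_trans (hg hu' hv hc) hvx) (not_le.2 hxu')
      have h1 := measure_mono (μ := volume) hsub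
      rw [Real.volume_Ioo, sub_zero] at h1
      rw [hGIic]
      calc (volume ((g ⁻¹' Set.Iic x) ∩ Set.Ioo 0 1)).toReal
          ≤ (ENNReal.ofReal u').toReal := ENNReal.toReal_mono (by simp) h1
        _ = u' := ENNReal.toReal_ofReal hu'.1.le
        _ < u := hu'u
    have hmem : g u ∈ {x | u ≤ (G (Set.Iic x)).toReal} := claim1 _ (le_refl _)
    have hsub : {x | u ≤ (G (Set.Iic x)).toReal} ⊆ Set.Ici (g u) := by
      intro x hx
      by_contra hc
      simp only [Set.mem_Ici, not_le] at hc
      exact absurd hx (not_le.2 (claim2 x hc))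
    rw [quantile]
    exact le_antisymm (csInf_le ⟨g u, fun x hx => hsub hx⟩ hmem)
      (le_csInf ⟨g u, hmem⟩ fun x hx => hsub hx)
  -- Step B: a.e. point is good
  set clamp : ℕ → ℝ → ℝ := fun m u => max (1/(m+2)) (min u (1 - 1/(m+2))) with hclamp
  have hclamp_mem : ∀ m u, clamp m u ∈ Set.Ioo (0:ℝ) 1 := by
    intro m u
    have h1 : (0:ℝ) < 1/((m:ℝ)+2) := by positivity
    have h2 : 1/((m:ℝ)+2) ≤ 1/2 := by
      rw [div_le_div_iff₀ (by positivity) (by norm_num)]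
      have := Nat.cast_nonneg (α := ℝ) m
      linarith
    constructor
    · exact lt_of_lt_of_le h1 (le_max_left _ _)
    · apply max_lt (by linarith)
      apply lt_of_le_of_lt (min_le_right _ _)
      linarith
  have hclamp_mono : ∀ m, Monotone (clamp m) := by
    intro m u v huv
    exact max_le_max (le_refl _) (min_le_min huv (le_refl _))
  have hgm_mono : ∀ m, Monotone (fun u => g (clamp m u)) := by
    intro m u v huv
    exact hg (hclamp_mem m u) (hclamp_mem m v) (hclamp_mono m huv)
  have hDcount : ∀ m : ℕ, Set.Countable {u | ¬ContinuousAt (fun u => g (clamp m u)) u} :=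
    fun m => (hgm_mono m).countable_not_continuousAt
  have hNnull : uniform01 (⋃ m : ℕ, {u | ¬ContinuousAt (fun u => g (clamp m u)) u}) = 0 := by
    have hvol : volume (⋃ m : ℕ, {u | ¬ContinuousAt (fun u => g (clamp m u)) u}) = 0 :=
      measure_iUnion_null fun m => (hDcount m).measure_zero volume
    rw [uniform01, Measure.restrict_apply' measurableSet_Ioo]
    exact le_antisymm (le_trans (measure_mono Set.inter_subset_left) hvol.le) zero_le
  rw [← compl_mem_ae_iff] at hNnull
  filter_upwards [ae01, hNnull] with u hu01 huN
  apply stepA u hu01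
  intro x hx
  -- choose a clamp level around u
  obtain ⟨k, hk⟩ := exists_nat_one_div_lt (lt_min_iff.2 ⟨hu01.1, by linarith [hu01.2]⟩
    : (0:ℝ) < min u (1 - u))
  have hk2 : (1:ℝ)/((k:ℝ)+2) < min u (1-u) := by
    apply lt_of_le_of_lt _ hk
    apply div_le_div_of_nonneg_left (by norm_num) (by positivity)
    linarith
  have ham : (1:ℝ)/((k:ℝ)+2) < u := lt_of_lt_of_le hk2 (min_le_left _ _)
  have hbm : u < 1 - 1/((k:ℝ)+2) := by
    have := lt_of_lt_of_le hk2 (min_le_right _ _)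
    linarith
  have hcont : ContinuousAt (fun u => g (clamp k u)) u := by
    by_contra hc
    exact huN (Set.mem_iUnion.2 ⟨k, hc⟩)
  have hclamp_u : clamp k u = u := by
    rw [hclamp]
    simp only []
    rw [min_eq_left (by push_cast; linarith), max_eq_right (by push_cast; linarith)]
  have hgu : g (clamp k u) = g u := by rw [hclamp_u]
  -- find a point strictly to the left where g is still above x
  have hev : ∀ᶠ v in 𝓝 u, x < g (clamp k v) := by
    have h1 : ∀ᶠ z in 𝓝 (g (clamp k u)), x < z := by
      rw [hclamp_u]
      exact eventually_gt_nhds hx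
    exact hcont.eventually h1
  have hseq : Tendsto (fun j : ℕ => u - 1/(j+1)) atTop (𝓝 u) := by
    have := tendsto_one_div_add_atTop_nhds_zero_nat (𝕜 := ℝ)
    simpa using tendsto_const_nhds.sub this
  have hev2 := hseq.eventually hev
  have hev3 : ∀ᶠ j : ℕ in atTop, 1/((j:ℝ)+1) < u - 1/((k:ℝ)+2) := by
    have hpos : (0:ℝ) < u - 1/((k:ℝ)+2) := by linarith
    obtain ⟨j0, hj0⟩ := exists_nat_one_div_lt hpos
    filter_upwards [eventually_ge_atTop j0] with j hj
    apply lt_of_le_of_lt _ hj0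
    apply div_le_div_of_nonneg_left (by norm_num) (by positivity)
    push_cast
    exact_mod_cast (by exact_mod_cast Nat.add_le_add_right hj 1 : (j0:ℕ)+1 ≤ j+1)
  obtain ⟨j, hjx, hjr⟩ := (hev2.and hev3).exists
  set v := u - 1/((j:ℝ)+1) with hv
  have hv_pos : (0:ℝ) < 1/((j:ℝ)+1) := by positivity
  have hv_mem : v ∈ Set.Ioo (0:ℝ) 1 := by
    constructor
    · rw [hv]
      have h1 : (0:ℝ) < 1/((k:ℝ)+2) := by positivity
      linarith [hjr]
    · rw [hv]; linarith [hu01.2]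
  have hclamp_v : clamp k v = v := by
    rw [hclamp]
    simp only []
    rw [min_eq_left, max_eq_right]
    · rw [hv]; push_cast; linarith [hjr]
    · rw [hv]; push_cast; linarith [hbm, hv_pos]
  refine ⟨v, hv_mem, ?_, ?_⟩
  · rw [hv]; linarith
  · rw [← hclamp_v]; exact hjx

end QuantileMix

/-! ### Quantile mixtures preserve the comonotonic sum -/

section Mix

variable {n : ℕ} {F : Fin n → Measure ℝ} {Λ : Matrix (Fin n) (Fin n) ℝ}

lemma mix_monotoneOn (hΛ : DoublyStochastic Λ) (hFp : ∀ i, IsProbabilityMeasure (F i))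
    (i : Fin n) :
    MonotoneOn (fun u => ∑ j, Λ i j * quantile (F j) u) (Set.Ioo 0 1) := by
  intro u hu v hv huv
  apply Finset.sum_le_sum
  intro j _
  haveI := hFp j
  exact mul_le_mul_of_nonneg_left (quantile_monotoneOn hu hv huv) (hΛ.1 i j)

lemma mix_aemeasurable (hFp : ∀ i, IsProbabilityMeasure (F i)) (i : Fin n) :
    AEMeasurable (fun u => ∑ j, Λ i j * quantile (F j) u) uniform01 := by
  apply Finset.aemeasurable_fun_sum
  intro j _
  haveI := hFp j
  exact quantile_aemeasurable.const_mul _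

lemma mix_fn_integrable (hFp : ∀ i, IsProbabilityMeasure (F i))
    (hFint : ∀ i, Integrable id (F i)) (i : Fin n) :
    Integrable (fun u => ∑ j, Λ i j * quantile (F j) u) uniform01 :=
  integrable_finset_sum _ (fun j _ => by
    haveI := hFp j
    exact (integrable_quantile (hFint j)).const_mul _)

lemma quantileMix_prob (hFp : ∀ i, IsProbabilityMeasure (F i)) (i : Fin n) :
    IsProbabilityMeasure (quantileMix Λ F i) := by
  rw [quantileMix]
  exact Measure.isProbabilityMeasure_map (mix_aemeasurable hFp i)

lemma quantileMix_integrable (hFp : ∀ i, IsProbabilityMeasure (F i))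
    (hFint : ∀ i, Integrable id (F i)) (i : Fin n) :
    Integrable id (quantileMix Λ F i) := by
  rw [quantileMix]
  exact (integrable_map_measure aestronglyMeasurable_id (mix_aemeasurable hFp i)).2
    (mix_fn_integrable hFp hFint i)

lemma comono_quantileMix (hΛ : DoublyStochastic Λ) (hFp : ∀ i, IsProbabilityMeasure (F i)) :
    comonoSum n (quantileMix Λ F) = comonoSum n F := by
  rw [comonoSum, comonoSum]
  apply Measure.map_congr
  have hae : ∀ i : Fin n, ∀ᵐ u ∂uniform01,
      quantile (quantileMix Λ F i) u = ∑ j, Λ i j * quantile (F j) u := by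
    intro i
    rw [quantileMix]
    exact quantile_map_monotoneOn (mix_monotoneOn hΛ hFp i) (mix_aemeasurable hFp i)
  have hall := ae_all_iff.2 hae
  filter_upwards [hall] with u hu
  rw [Finset.sum_congr rfl (fun i _ => hu i), Finset.sum_comm]
  apply Finset.sum_congr rfl
  intro j _
  rw [← Finset.sum_mul, hΛ.2.2 j, one_mul]

end Mix

/-! ### The worst-case identity -/

theorem worstCase_eq {n : ℕ} (ρ : Measure ℝ → ℝ) (hρ : CxConsistentRisk ρ)
    (F : Fin n → Measure ℝ) (hFp : ∀ i, IsProbabilityMeasure (F i))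
    (hFint : ∀ i, Integrable id (F i)) :
    worstCase ρ n F = ((ρ (comonoSum n F) : ℝ) : EReal) := by
  rw [worstCase]
  apply le_antisymm
  · apply sSup_le
    rintro y ⟨H, hH, rfl⟩
    obtain ⟨hHp, hHint, hcx⟩ := aggSet_convexOrder hFp hFint hH
    have h := hρ H (comonoSum n F) hHp (comono_prob hFp) hHint
      (comono_integrable hFp hFint) hcx
    exact EReal.coe_le_coe_iff.2 h
  · apply le_sSup
    exact ⟨comonoSum n F, comono_mem_aggSet hFp, rfl⟩


end Agg

/-- Proposition 4.3(ii): for a convex-order consistent risk measure,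
    ρ̄(𝐅) = ρ̄(Λ⊗𝐅) = ρ(F₁⊕⋯⊕Fₙ). -/
theorem stmt11 (n : ℕ) (ρ : Measure ℝ → ℝ) (hρ : CxConsistentRisk ρ)
    (F : Fin n → Measure ℝ) (hF : ∀ i, IsProbabilityMeasure (F i))
    (hFint : ∀ i, Integrable id (F i))
    (Λ : Matrix (Fin n) (Fin n) ℝ) (hΛ : DoublyStochastic Λ) :
    worstCase ρ n F = worstCase ρ n (quantileMix Λ F) ∧
      worstCase ρ n F = ((ρ (comonoSum n F) : ℝ) : EReal) := by
  have hGp : ∀ i, IsProbabilityMeasure (quantileMix Λ F i) := Agg.quantileMix_prob hF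
  have hGint : ∀ i, Integrable id (quantileMix Λ F i) := Agg.quantileMix_integrable hF hFint
  have h1 := Agg.worstCase_eq ρ hρ F hF hFint
  have h2 := Agg.worstCase_eq ρ hρ (quantileMix Λ F) hGp hGint
  have h3 := Agg.comono_quantileMix hΛ hF
  refine ⟨?_, h1⟩
  rw [h1, h2, h3]

end
end

section
/- Let α > 0, θ₁,…,θₙ > 0, and let Λ = (Λᵢⱼ) be any n×n matrix with positive entries. Then the quantile mixture Λ⊗𝐏_{α,𝛉} equals 𝐏_{α,Λ𝛉}; that is, for each i, the law of ∑ⱼ Λᵢⱼ P_{α,θⱼ}⁻¹(U) (U uniform on (0,1)) is the Pareto distribution P_{α,(Λ𝛉)ᵢ} with scale (Λ𝛉)ᵢ = ∑ⱼ Λᵢⱼθⱼ. -/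
open MeasureTheory
open scoped ENNReal BigOperators

noncomputable section

lemma pareto_Iic_of_lt {α c x : ℝ} (hx : x < c) : pareto α c (Set.Iic x) = 0 := by
  rw [pareto, withDensity_apply _ measurableSet_Iic]
  rw [setLIntegral_congr_fun measurableSet_Iic
    (fun t (ht : t ≤ x) => if_neg (by linarith : ¬ c ≤ t))]
  simp

lemma pareto_Iic {α c x : ℝ} (hα : 0 < α) (hc : 0 < c) (hx : c ≤ x) :
    pareto α c (Set.Iic x) = ENNReal.ofReal (1 - (c / x) ^ α) := by
  have hx0 : 0 < x := hc.trans_le hx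
  rw [pareto, withDensity_apply _ measurableSet_Iic]
  have h1 : ∀ t : ℝ, (if c ≤ t then ENNReal.ofReal (α * c ^ α / t ^ (α + 1)) else 0)
      = (Set.Ici c).indicator (fun t => ENNReal.ofReal (α * c ^ α / t ^ (α + 1))) t := by
    intro t; simp [Set.indicator_apply]
  simp_rw [h1]
  rw [lintegral_indicator measurableSet_Ici, Measure.restrict_restrict measurableSet_Ici,
    Set.Ici_inter_Iic]
  have hInt : IntegrableOn (fun t : ℝ => α * c ^ α / t ^ (α + 1)) (Set.Icc c x) := by
    apply ContinuousOn.integrableOn_Icc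
    apply continuousOn_const.div
    · exact continuousOn_id.rpow_const fun t ht => Or.inl (hc.trans_le ht.1).ne'
    · exact fun t ht => (Real.rpow_pos_of_pos (hc.trans_le ht.1) _).ne'
  rw [← ofReal_integral_eq_lintegral_ofReal hInt]
  · congr 1
    rw [MeasureTheory.integral_Icc_eq_integral_Ioc, ← intervalIntegral.integral_of_le hx]
    have h2 : ∫ t in c..x, α * c ^ α / t ^ (α + 1) = ∫ t in c..x, α * c ^ α * t ^ (-(α + 1)) := by
      apply intervalIntegral.integral_congr
      intro t ht
      rw [Set.uIcc_of_le hx] at ht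
      show α * c ^ α / t ^ (α + 1) = α * c ^ α * t ^ (-(α + 1))
      rw [Real.rpow_neg (hc.trans_le ht.1).le, div_eq_mul_inv]
    rw [h2, intervalIntegral.integral_const_mul,
      integral_rpow (Or.inr ⟨by intro h; linarith [neg_eq_iff_eq_neg.mp h],
        by rw [Set.uIcc_of_le hx]; intro h; linarith [h.1]⟩)]
    have e : -(α + 1) + 1 = -α := by ring
    rw [e, Real.div_rpow hc.le hx0.le, Real.rpow_neg hx0.le, Real.rpow_neg hc.le]
    have hca : (0:ℝ) < c ^ α := Real.rpow_pos_of_pos hc _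
    have hxa : (0:ℝ) < x ^ α := Real.rpow_pos_of_pos hx0 _
    field_simp
    ring
  · filter_upwards [ae_restrict_mem measurableSet_Icc] with t ht
    have ht0 : 0 < t := hc.trans_le ht.1
    positivity

lemma pareto_g_iff {α c x u : ℝ} (hα : 0 < α) (hc : 0 < c) (hu : u ∈ Set.Ioo (0:ℝ) 1)
    (hx : c ≤ x) : c * (1 - u) ^ (-(1/α)) ≤ x ↔ u ≤ 1 - (c / x) ^ α := by
  have hx0 : 0 < x := hc.trans_le hx
  have hv : 0 < 1 - u := by linarith [hu.2]
  have hva : 0 < (1 - u) ^ (1/α) := Real.rpow_pos_of_pos hv _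
  rw [Real.rpow_neg hv.le]
  rw [mul_inv_le_iff₀ hva, mul_comm, ← div_le_iff₀ hx0]
  rw [one_div, Real.le_rpow_inv_iff_of_pos (by positivity) hv.le hα]
  constructor <;> intro h <;> linarith

lemma pareto_lt_g {α c u : ℝ} (hα : 0 < α) (hc : 0 < c) (hu : u ∈ Set.Ioo (0:ℝ) 1) :
    c < c * (1 - u) ^ (-(1/α)) := by
  have hv : (1:ℝ) < (1 - u) ^ (-(1/α)) :=
    Real.one_lt_rpow_of_pos_of_lt_one_of_neg (by linarith [hu.2]) (by linarith [hu.1])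
      (by rw [neg_lt, neg_zero]; positivity)
  nlinarith

lemma toReal_pareto_Iic {α c x : ℝ} (hα : 0 < α) (hc : 0 < c) (hx : c ≤ x) :
    (pareto α c (Set.Iic x)).toReal = 1 - (c / x) ^ α := by
  have hx0 : 0 < x := hc.trans_le hx
  rw [pareto_Iic hα hc hx, ENNReal.toReal_ofReal]
  have : (c / x) ^ α ≤ 1 := Real.rpow_le_one (by positivity) (by rw [div_le_one hx0]; exact hx) hα.le
  linarith

lemma quantile_pareto {α c : ℝ} (hα : 0 < α) (hc : 0 < c) {u : ℝ}
    (hu : u ∈ Set.Ioo (0:ℝ) 1) :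
    quantile (pareto α c) u = c * (1 - u) ^ (-(1/α)) := by
  have hset : {x : ℝ | u ≤ (pareto α c (Set.Iic x)).toReal} = Set.Ici (c * (1 - u) ^ (-(1/α))) := by
    ext x
    simp only [Set.mem_setOf_eq, Set.mem_Ici]
    constructor
    · intro h
      by_cases hx : c ≤ x
      · rw [toReal_pareto_Iic hα hc hx] at h
        exact (pareto_g_iff hα hc hu hx).2 h
      · rw [pareto_Iic_of_lt (lt_of_not_ge hx)] at h
        simp at h
        linarith [hu.1]
    · intro h
      have hx : c ≤ x := le_of_lt (lt_of_lt_of_le (pareto_lt_g hα hc hu) h)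
      rw [toReal_pareto_Iic hα hc hx]
      exact (pareto_g_iff hα hc hu hx).1 h
  rw [quantile, hset, csInf_Ici]

lemma measurable_rpow_const (p : ℝ) : Measurable (fun x : ℝ => x ^ p) :=
  measurable_of_continuousOn_compl_singleton 0 fun x hx =>
    (Real.continuousAt_rpow_const x p (Or.inl hx)).continuousWithinAt

lemma measurable_pareto_g (α c : ℝ) :
    Measurable (fun u : ℝ => c * (1 - u) ^ (-(1/α))) :=
  measurable_const.mul ((measurable_rpow_const _).comp (measurable_const.sub measurable_id))

lemma map_uniform01_pareto {α c : ℝ} (hα : 0 < α) (hc : 0 < c) :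
    uniform01.map (fun u : ℝ => c * (1 - u) ^ (-(1/α))) = pareto α c := by
  set g := fun u : ℝ => c * (1 - u) ^ (-(1/α)) with hg
  have hgm : Measurable g := measurable_pareto_g α c
  have hfin : IsFiniteMeasure (uniform01.map g) := by
    constructor
    rw [Measure.map_apply hgm MeasurableSet.univ]
    calc uniform01 (g ⁻¹' Set.univ) ≤ uniform01 Set.univ := measure_mono (Set.subset_univ _)
      _ < ⊤ := by
          rw [uniform01, Measure.restrict_apply_univ, Real.volume_Ioo]
          exact ENNReal.ofReal_lt_top
  refine @Measure.ext_of_Iic ℝ _ _ _ _ _ _ _ _ hfin fun x => ?_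
  rw [Measure.map_apply hgm measurableSet_Iic, uniform01,
    Measure.restrict_apply (hgm measurableSet_Iic)]
  by_cases hx : c ≤ x
  · have hx0 : 0 < x := hc.trans_le hx
    have hle1 : (c / x) ^ α ≤ 1 :=
      Real.rpow_le_one (by positivity) (by rw [div_le_one hx0]; exact hx) hα.le
    have hpos : 0 < (c / x) ^ α := Real.rpow_pos_of_pos (by positivity) _
    have hseq : g ⁻¹' Set.Iic x ∩ Set.Ioo 0 1 = Set.Ioc 0 (1 - (c / x) ^ α) := by
      ext u
      simp only [Set.mem_inter_iff, Set.mem_preimage, Set.mem_Iic, Set.mem_Ioo, Set.mem_Ioc]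
      constructor
      · rintro ⟨h1, h2⟩
        exact ⟨h2.1, (pareto_g_iff hα hc h2 hx).1 h1⟩
      · rintro ⟨h1, h2⟩
        have hu : u ∈ Set.Ioo (0:ℝ) 1 := ⟨h1, by linarith⟩
        exact ⟨(pareto_g_iff hα hc hu hx).2 h2, hu⟩
    rw [hseq, Real.volume_Ioc, pareto_Iic hα hc hx]
    congr 1
    ring
  · have hseq : g ⁻¹' Set.Iic x ∩ Set.Ioo 0 1 = ∅ := by
      ext u
      simp only [Set.mem_inter_iff, Set.mem_preimage, Set.mem_Iic, Set.mem_empty_iff_false,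
        iff_false, not_and]
      intro h1 h2
      have h1' : c * (1 - u) ^ (-(1/α)) ≤ x := h1
      have := pareto_lt_g hα hc h2 (c := c)
      linarith [lt_of_not_ge hx]
    rw [hseq, pareto_Iic_of_lt (lt_of_not_ge hx)]
    simp

/-- Proposition 5.1(i): a quantile mixture of Pareto distributions with the same
    shape α is Pareto with mixed scale. -/
theorem stmt14 (n : ℕ) (α : ℝ) (hα : 0 < α)
    (θ : Fin n → ℝ) (hθ : ∀ i, 0 < θ i)
    (Λ : Matrix (Fin n) (Fin n) ℝ) (hΛ : ∀ i j, 0 < Λ i j) (i : Fin n) :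
    quantileMix Λ (fun j => pareto α (θ j)) i = pareto α (∑ j, Λ i j * θ j) := by
  have hne : (Finset.univ : Finset (Fin n)).Nonempty := ⟨i, Finset.mem_univ i⟩
  have hs : 0 < ∑ j, Λ i j * θ j :=
    Finset.sum_pos (fun j _ => mul_pos (hΛ i j) (hθ j)) hne
  have hmap : quantileMix Λ (fun j => pareto α (θ j)) i
      = uniform01.map (fun u : ℝ => (∑ j, Λ i j * θ j) * (1 - u) ^ (-(1/α))) := by
    rw [quantileMix]
    apply Measure.map_congr
    have h : ∀ᵐ u ∂uniform01, u ∈ Set.Ioo (0:ℝ) 1 := ae_restrict_mem measurableSet_Ioo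
    filter_upwards [h] with u hu
    rw [Finset.sum_mul]
    exact Finset.sum_congr rfl fun j _ => by
      rw [quantile_pareto hα (hθ j) hu]; ring
  rw [hmap, map_uniform01_pareto hα hs]
end
end
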